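/- arXiv:2208.04985 — 4 statements merged into one kernel-verified Lean document; each statement's English description precedes it below -/
import Mathlib

section
/- There exists a unique δ** ∈ (0,1) such that π^D(δ**) = π^EAO, π^D(δ) > π^EAO for every δ ∈ (δ**,1), and π^D(δ) < π^EAO for every δ ∈ (0,δ**); moreover δ** < δ̄ := π^EAO / (∫_{θ*}^1 𝒢(ψ(θ)) f(θ) dθ). Here π^D(δ) := max_{x∈[0,1]} Π^D(x,δ) and π^EAO := max_{p∈[0,1]} (1−F(p))·𝒢(p). -/
open MeasureTheory

/-- `F(x) = ∫₀^x f`, with the convention that it is `0` for `x ≤ 0`. -/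
noncomputable def cdf (f : ℝ → ℝ) (x : ℝ) : ℝ := ∫ t in Set.Ioc (0:ℝ) x, f t

/-- `𝒢(x) = ∫₀^x G(y) dy`, the left-hand integral of the cdf of `g` (`= 0` for `x ≤ 0`). -/
noncomputable def calG (g : ℝ → ℝ) (x : ℝ) : ℝ := ∫ y in Set.Ioc (0:ℝ) x, cdf g y

/-- `μ = ∫₀¹ ω g(ω) dω`, the mean cost. -/
noncomputable def muG (g : ℝ → ℝ) : ℝ := ∫ t in Set.Ioc (0:ℝ) 1, t * g t

/-- The virtual valuation `ψ(θ) = θ − (1 − F(θ))/f(θ)`. -/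
noncomputable def psi (f : ℝ → ℝ) (θ : ℝ) : ℝ := θ - (1 - cdf f θ) / f θ

/-- The truncated virtual valuation `ψ(θ,x) = θ − (F(x) − F(θ))/f(θ)`. -/
noncomputable def psiT (f : ℝ → ℝ) (x θ : ℝ) : ℝ := θ - (cdf f x - cdf f θ) / f θ

/-- The dynamic-mechanism profit
`Π^D(x,δ) = (1−F(x))·(x − δ·∫_{θ**(x)}^x G(ψ(θ,x)) dθ − μ) + δ·∫_{θ**(x)}^x 𝒢(ψ(θ,x)) f(θ) dθ`
for `x ∈ (0,1]`, with `Π^D(0,δ) = −μ`; here `θss` is the map `x ↦ θ**(x)`. -/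
noncomputable def PiD (f g : ℝ → ℝ) (θss : ℝ → ℝ) (x δ : ℝ) : ℝ :=
  if x = 0 then -(muG g)
  else (1 - cdf f x) * (x - δ * (∫ θ in (θss x)..x, cdf g (psiT f x θ)) - muG g)
    + δ * ∫ θ in (θss x)..x, calG g (psiT f x θ) * f θ


section KSProofs
open Set intervalIntegral

namespace KS

lemma cdf_eq_intervalIntegral (f : ℝ → ℝ) {x : ℝ} (hx : (0:ℝ) ≤ x) :
    cdf f x = ∫ t in (0:ℝ)..x, f t := (intervalIntegral.integral_of_le hx).symm

lemma cdf_zero (f : ℝ → ℝ) : cdf f 0 = 0 := by simp [cdf]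

/-- interval integrability of an `Icc 0 1`-integrable function on subintervals -/
lemma intInt {f : ℝ → ℝ} (h : IntegrableOn f (Set.Icc 0 1)) {a b : ℝ}
    (ha : a ∈ Set.Icc (0:ℝ) 1) (hb : b ∈ Set.Icc (0:ℝ) 1) :
    IntervalIntegrable f volume a b :=
  (h.mono_set (Set.uIcc_subset_Icc ha hb)).intervalIntegrable

lemma contOn_intInt {f : ℝ → ℝ} (h : ContinuousOn f (Set.Icc 0 1)) {a b : ℝ}
    (ha : a ∈ Set.Icc (0:ℝ) 1) (hb : b ∈ Set.Icc (0:ℝ) 1) :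
    IntervalIntegrable f volume a b :=
  (h.mono (Set.uIcc_subset_Icc ha hb)).intervalIntegrable

lemma cdf_contOn {f : ℝ → ℝ} (h : IntegrableOn f (Set.Icc 0 1)) :
    ContinuousOn (cdf f) (Set.Icc 0 1) :=
  intervalIntegral.continuousOn_primitive h

lemma cdf_sub {f : ℝ → ℝ} (h : IntegrableOn f (Set.Icc 0 1)) {a b : ℝ}
    (ha : a ∈ Set.Icc (0:ℝ) 1) (hb : b ∈ Set.Icc (0:ℝ) 1) :
    cdf f b - cdf f a = ∫ t in a..b, f t := by
  rw [cdf_eq_intervalIntegral f ha.1, cdf_eq_intervalIntegral f hb.1]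
  rw [← intervalIntegral.integral_add_adjacent_intervals (a := 0) (b := a) (c := b)
      (intInt h (by simp) ha) (intInt h ha hb)]
  ring

lemma cdf_mono {f : ℝ → ℝ} (h : IntegrableOn f (Set.Icc 0 1))
    (hpos : ∀ t ∈ Set.Icc (0:ℝ) 1, 0 < f t) {a b : ℝ}
    (ha : a ∈ Set.Icc (0:ℝ) 1) (hb : b ∈ Set.Icc (0:ℝ) 1) (hab : a ≤ b) :
    cdf f a ≤ cdf f b := by
  have := cdf_sub h ha hb
  have hnn : 0 ≤ ∫ t in a..b, f t := by
    apply intervalIntegral.integral_nonneg hab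
    intro u hu
    exact (hpos u ⟨le_trans ha.1 hu.1, le_trans hu.2 hb.2⟩).le
  linarith

lemma cdf_strict {f : ℝ → ℝ} (h : IntegrableOn f (Set.Icc 0 1))
    (hpos : ∀ t ∈ Set.Icc (0:ℝ) 1, 0 < f t) {a b : ℝ}
    (ha : a ∈ Set.Icc (0:ℝ) 1) (hb : b ∈ Set.Icc (0:ℝ) 1) (hab : a < b) :
    cdf f a < cdf f b := by
  have := cdf_sub h ha hb
  have hp : 0 < ∫ t in a..b, f t := by
    apply intervalIntegral_pos_of_pos_on (intInt h ha hb)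
    · intro u hu
      exact hpos u ⟨le_trans ha.1 hu.1.le, le_trans hu.2.le hb.2⟩
    · exact hab
  linarith

lemma cdf_nonneg {f : ℝ → ℝ} (h : IntegrableOn f (Set.Icc 0 1))
    (hpos : ∀ t ∈ Set.Icc (0:ℝ) 1, 0 < f t) {x : ℝ} (hx : x ∈ Set.Icc (0:ℝ) 1) :
    0 ≤ cdf f x := by
  have := cdf_mono h hpos (by simp) hx hx.1
  rwa [cdf_zero] at this

lemma cdf_le_one {f : ℝ → ℝ} (h : IntegrableOn f (Set.Icc 0 1))
    (hpos : ∀ t ∈ Set.Icc (0:ℝ) 1, 0 < f t) (hone : cdf f 1 = 1) {x : ℝ}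
    (hx : x ∈ Set.Icc (0:ℝ) 1) : cdf f x ≤ 1 := by
  have := cdf_mono h hpos hx (by simp) hx.2
  linarith

lemma cdf_lt_one {f : ℝ → ℝ} (h : IntegrableOn f (Set.Icc 0 1))
    (hpos : ∀ t ∈ Set.Icc (0:ℝ) 1, 0 < f t) (hone : cdf f 1 = 1) {x : ℝ}
    (hx : x ∈ Set.Icc (0:ℝ) 1) (hx1 : x < 1) : cdf f x < 1 := by
  have := cdf_strict h hpos hx (by simp) hx1
  linarith

/-- FTC-1 for `cdf` at interior points. -/
lemma cdf_hasDerivAt {f : ℝ → ℝ} (h : IntegrableOn f (Set.Icc 0 1))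
    (hc : ContinuousOn f (Set.Icc 0 1)) {y : ℝ} (hy : y ∈ Set.Ioo (0:ℝ) 1) :
    HasDerivAt (cdf f) (f y) y := by
  have hnhds : Set.Icc (0:ℝ) 1 ∈ nhds y := Icc_mem_nhds hy.1 hy.2
  have hmeas : StronglyMeasurableAtFilter f (nhds y) :=
    ⟨Set.Icc 0 1, hnhds, h.aestronglyMeasurable⟩
  have hD := intervalIntegral.integral_hasDerivAt_right
    (intInt h ⟨le_refl 0, zero_le_one⟩ ⟨hy.1.le, hy.2.le⟩) hmeas (hc.continuousAt hnhds)
  apply hD.congr_of_eventuallyEq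
  filter_upwards [Ioi_mem_nhds hy.1] with u hu
  exact cdf_eq_intervalIntegral f (le_of_lt hu)

/-- FTC-2 wrapper. -/
lemma ftc2 {H H' : ℝ → ℝ} {a b : ℝ} (hab : a ≤ b) (hcont : ContinuousOn H (Set.Icc a b))
    (hderiv : ∀ x ∈ Set.Ioo a b, HasDerivAt H (H' x) x)
    (hint : IntervalIntegrable H' volume a b) :
    ∫ x in a..b, H' x = H b - H a :=
  intervalIntegral.integral_eq_sub_of_hasDeriv_right_of_le hab hcont
    (fun x hx => (hderiv x hx).hasDerivWithinAt) hint


/-- Integration by parts on a subinterval of `[0,1]`. -/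
lemma ibp {u v u' v' : ℝ → ℝ} {a b : ℝ} (hab : a ≤ b)
    (hu : ContinuousOn u (Set.Icc a b)) (hv : ContinuousOn v (Set.Icc a b))
    (hu' : ContinuousOn u' (Set.Icc a b)) (hv' : ContinuousOn v' (Set.Icc a b))
    (hud : ∀ x ∈ Set.Ioo a b, HasDerivAt u (u' x) x)
    (hvd : ∀ x ∈ Set.Ioo a b, HasDerivAt v (v' x) x) :
    ∫ x in a..b, u x * v' x = u b * v b - u a * v a - ∫ x in a..b, u' x * v x := by
  have h1 : ∫ x in a..b, (u' x * v x + u x * v' x) = u b * v b - u a * v a := by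
    apply ftc2 hab (hu.mul hv) (fun x hx => (hud x hx).mul (hvd x hx))
    exact ((hu'.mul hv).add (hu.mul hv')).intervalIntegrable_of_Icc hab
  have h2 : ∫ x in a..b, (u' x * v x + u x * v' x)
      = (∫ x in a..b, u' x * v x) + ∫ x in a..b, u x * v' x := by
    apply intervalIntegral.integral_add
    · exact (hu'.mul hv).intervalIntegrable_of_Icc hab
    · exact (hu.mul hv').intervalIntegrable_of_Icc hab
  rw [h2] at h1; linarith

structure Setup (f g : ℝ → ℝ) (θs : ℝ) (dψ : ℝ → ℝ) : Prop where
  fInt : IntegrableOn f (Set.Icc 0 1)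
  gInt : IntegrableOn g (Set.Icc 0 1)
  fPos : ∀ t ∈ Set.Icc (0:ℝ) 1, 0 < f t
  gPos : ∀ t ∈ Set.Icc (0:ℝ) 1, 0 < g t
  fCont : ContinuousOn f (Set.Icc 0 1)
  gCont : ContinuousOn g (Set.Icc 0 1)
  fOne : cdf f 1 = 1
  gOne : cdf g 1 = 1
  psiMono : StrictMonoOn (psi f) (Set.Icc 0 1)
  θsMem : θs ∈ Set.Ioo (0:ℝ) 1
  θs0 : psi f θs = 0
  dψCont : ContinuousOn dψ (Set.Icc 0 1)
  dψPos : ∀ θ ∈ Set.Icc (0:ℝ) 1, 0 < dψ θ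
  dψDeriv : ∀ θ ∈ Set.Icc (0:ℝ) 1, HasDerivWithinAt (psi f) (dψ θ) (Set.Icc 0 1) θ

namespace Setup

variable {f g dψ : ℝ → ℝ} {θs : ℝ} (S : Setup f g θs dψ)
include S

lemma psi_one : psi f 1 = 1 := by
  unfold psi; rw [S.fOne]; simp

lemma psi_θs : psi f θs = 0 := S.θs0

lemma psiCont : ContinuousOn (psi f) (Set.Icc 0 1) :=
  fun θ hθ => (S.dψDeriv θ hθ).continuousWithinAt

lemma psiDerivAt {θ : ℝ} (hθ : θ ∈ Set.Ioo (0:ℝ) 1) : HasDerivAt (psi f) (dψ θ) θ :=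
  (S.dψDeriv θ (Set.Ioo_subset_Icc_self hθ)).hasDerivAt (Icc_mem_nhds hθ.1 hθ.2)

lemma psiMonotone : MonotoneOn (psi f) (Set.Icc 0 1) := S.psiMono.monotoneOn

lemma psiMem {θ : ℝ} (hθ : θ ∈ Set.Icc θs 1) : psi f θ ∈ Set.Icc (0:ℝ) 1 := by
  have h0 : θs ∈ Set.Icc (0:ℝ) 1 := ⟨S.θsMem.1.le, S.θsMem.2.le⟩
  have hθ' : θ ∈ Set.Icc (0:ℝ) 1 := ⟨le_trans S.θsMem.1.le hθ.1, hθ.2⟩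
  constructor
  · have := S.psiMonotone h0 hθ' hθ.1; rw [S.θs0] at this; exact this
  · have := S.psiMonotone hθ' ⟨zero_le_one, le_refl 1⟩ hθ.2
    rwa [S.psi_one] at this

lemma psiMemIoo {θ : ℝ} (hθ : θ ∈ Set.Ioo θs 1) : psi f θ ∈ Set.Ioo (0:ℝ) 1 := by
  have h0 : θs ∈ Set.Icc (0:ℝ) 1 := ⟨S.θsMem.1.le, S.θsMem.2.le⟩
  have hθ' : θ ∈ Set.Icc (0:ℝ) 1 := ⟨le_trans S.θsMem.1.le hθ.1.le, hθ.2.le⟩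
  constructor
  · have := S.psiMono h0 hθ' hθ.1; rw [S.θs0] at this; exact this
  · have := S.psiMono hθ' ⟨zero_le_one, le_refl 1⟩ hθ.2
    rwa [S.psi_one] at this

lemma Fcont : ContinuousOn (cdf f) (Set.Icc 0 1) := cdf_contOn S.fInt
lemma Gcont : ContinuousOn (cdf g) (Set.Icc 0 1) := cdf_contOn S.gInt
lemma GInt : IntegrableOn (cdf g) (Set.Icc 0 1) := S.Gcont.integrableOn_Icc
lemma GcCont : ContinuousOn (calG g) (Set.Icc 0 1) := cdf_contOn S.GInt

lemma Gnonneg {y : ℝ} (hy : y ∈ Set.Icc (0:ℝ) 1) : 0 ≤ cdf g y :=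
  cdf_nonneg S.gInt S.gPos hy

lemma Gmono {a b : ℝ} (ha : a ∈ Set.Icc (0:ℝ) 1) (hb : b ∈ Set.Icc (0:ℝ) 1) (hab : a ≤ b) :
    cdf g a ≤ cdf g b := cdf_mono S.gInt S.gPos ha hb hab

lemma Gstrict {a b : ℝ} (ha : a ∈ Set.Icc (0:ℝ) 1) (hb : b ∈ Set.Icc (0:ℝ) 1) (hab : a < b) :
    cdf g a < cdf g b := cdf_strict S.gInt S.gPos ha hb hab

lemma FDerivAt {θ : ℝ} (hθ : θ ∈ Set.Ioo (0:ℝ) 1) : HasDerivAt (cdf f) (f θ) θ :=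
  cdf_hasDerivAt S.fInt S.fCont hθ

lemma GcDerivAt {y : ℝ} (hy : y ∈ Set.Ioo (0:ℝ) 1) : HasDerivAt (calG g) (cdf g y) y := by
  have : calG g = cdf (cdf g) := rfl
  rw [this]
  exact cdf_hasDerivAt S.GInt S.Gcont hy

/-- `𝒢(b) - 𝒢(a) = ∫_a^b G`. -/
lemma Gc_sub {a b : ℝ} (ha : a ∈ Set.Icc (0:ℝ) 1) (hb : b ∈ Set.Icc (0:ℝ) 1) :
    calG g b - calG g a = ∫ y in a..b, cdf g y := cdf_sub S.GInt ha hb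

lemma Gc_nonneg {y : ℝ} (hy : y ∈ Set.Icc (0:ℝ) 1) : 0 ≤ calG g y := by
  have h := S.Gc_sub (a := 0) (b := y) ⟨le_refl 0, zero_le_one⟩ hy
  have h0 : calG g 0 = 0 := by simp [calG]
  have hnn : 0 ≤ ∫ t in (0:ℝ)..y, cdf g t := by
    apply intervalIntegral.integral_nonneg hy.1
    intro u hu; exact S.Gnonneg ⟨hu.1, le_trans hu.2 hy.2⟩
  linarith

lemma Gc_mono {a b : ℝ} (ha : a ∈ Set.Icc (0:ℝ) 1) (hb : b ∈ Set.Icc (0:ℝ) 1) (hab : a ≤ b) :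
    calG g a ≤ calG g b := by
  have h := S.Gc_sub ha hb
  have hnn : 0 ≤ ∫ t in a..b, cdf g t := by
    apply intervalIntegral.integral_nonneg hab
    intro u hu; exact S.Gnonneg ⟨le_trans ha.1 hu.1, le_trans hu.2 hb.2⟩
  linarith

/-- convexity gradient inequality: `G a * (b - a) ≤ 𝒢 b - 𝒢 a`. -/
lemma Gc_grad {a b : ℝ} (ha : a ∈ Set.Icc (0:ℝ) 1) (hb : b ∈ Set.Icc (0:ℝ) 1) (hab : a ≤ b) :
    cdf g a * (b - a) ≤ calG g b - calG g a := by
  rw [S.Gc_sub ha hb]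
  have : cdf g a * (b - a) = ∫ _ in a..b, cdf g a := by
    rw [intervalIntegral.integral_const, smul_eq_mul]; ring
  rw [this]
  apply intervalIntegral.integral_mono_on hab (by simp)
    (contOn_intInt S.Gcont ha hb)
  intro u hu
  exact S.Gmono ha ⟨le_trans ha.1 hu.1, le_trans hu.2 hb.2⟩ hu.1

lemma psi_le_self {θ : ℝ} (hθ : θ ∈ Set.Icc (0:ℝ) 1) : psi f θ ≤ θ := by
  have h1 : cdf f θ ≤ 1 := cdf_le_one S.fInt S.fPos S.fOne hθ
  have h2 : 0 < f θ := S.fPos θ hθ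
  unfold psi
  have : 0 ≤ (1 - cdf f θ) / f θ := div_nonneg (by linarith) h2.le
  linarith

lemma F_le_one {θ : ℝ} (hθ : θ ∈ Set.Icc (0:ℝ) 1) : cdf f θ ≤ 1 :=
  cdf_le_one S.fInt S.fPos S.fOne hθ

lemma F_lt_one {θ : ℝ} (hθ : θ ∈ Set.Icc (0:ℝ) 1) (h1 : θ < 1) : cdf f θ < 1 :=
  cdf_lt_one S.fInt S.fPos S.fOne hθ h1

omit S in
lemma Gc_zero : calG g 0 = 0 := by simp [calG]

set_option maxHeartbeats 1000000 in
/-- The main inequality: the full-commitment dynamic profit at `x = 1, δ = 1` strictly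
exceeds the ex-ante profit at any price `p`. -/
theorem A_gt_E {p : ℝ} (hp : p ∈ Set.Ioo (0:ℝ) 1) :
    (1 - cdf f p) * calG g p < ∫ θ in θs..1, calG g (psi f θ) * f θ := by
  have hθs0 : (0:ℝ) < θs := S.θsMem.1
  have hθs1 : θs < 1 := S.θsMem.2
  have hθsI : θs ∈ Set.Icc (0:ℝ) 1 := ⟨hθs0.le, hθs1.le⟩
  have h1I : (1:ℝ) ∈ Set.Icc (0:ℝ) 1 := ⟨zero_le_one, le_refl 1⟩
  have hpI : p ∈ Set.Icc (0:ℝ) 1 := ⟨hp.1.le, hp.2.le⟩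
  -- obtain q with psi f q = p
  obtain ⟨q, hqmem, hq⟩ : ∃ q ∈ Set.Ioo θs 1, psi f q = p := by
    have hcont : ContinuousOn (psi f) (Set.Icc θs 1) :=
      S.psiCont.mono (Set.Icc_subset_Icc hθs0.le (le_refl 1))
    have := intermediate_value_Ioo hθs1.le hcont
    rw [S.θs0, S.psi_one] at this
    obtain ⟨q, hq1, hq2⟩ := this hp
    exact ⟨q, hq1, hq2⟩
  have hqI : q ∈ Set.Icc (0:ℝ) 1 := ⟨le_trans hθs0.le hqmem.1.le, hqmem.2.le⟩
  have hpq : p ≤ q := by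
    have := S.psi_le_self hqI; rw [hq] at this; exact this
  have hq1 : q < 1 := hqmem.2
  -- continuity packs
  have hcψ : ContinuousOn (psi f) (Set.Icc (0:ℝ) 1) := S.psiCont
  have hcF : ContinuousOn (cdf f) (Set.Icc (0:ℝ) 1) := S.Fcont
  have hmaps : Set.MapsTo (psi f) (Set.Icc θs 1) (Set.Icc (0:ℝ) 1) :=
    fun θ hθ => S.psiMem hθ
  have hcGψ : ContinuousOn (fun θ => cdf g (psi f θ)) (Set.Icc θs 1) :=
    S.Gcont.comp (hcψ.mono (Set.Icc_subset_Icc hθs0.le (le_refl 1))) hmaps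
  have hcGcψ : ContinuousOn (fun θ => calG g (psi f θ)) (Set.Icc θs 1) :=
    S.GcCont.comp (hcψ.mono (Set.Icc_subset_Icc hθs0.le (le_refl 1))) hmaps
  have hcdψ : ContinuousOn dψ (Set.Icc (0:ℝ) 1) := S.dψCont
  have hcf : ContinuousOn f (Set.Icc (0:ℝ) 1) := S.fCont
  -- derivative of θ ↦ calG g (psi f θ) at interior points of (θs, 1)
  have hGcψd : ∀ θ ∈ Set.Ioo θs 1,
      HasDerivAt (fun θ => calG g (psi f θ)) (cdf g (psi f θ) * dψ θ) θ := by
    intro θ hθ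
    have hθ' : θ ∈ Set.Ioo (0:ℝ) 1 := ⟨lt_trans hθs0 hθ.1, hθ.2⟩
    exact (S.GcDerivAt (S.psiMemIoo hθ)).comp θ (S.psiDerivAt hθ')
  -- (I-a) : A = ∫_{θs..1} (1-F) (G∘ψ) dψ
  have hIa : ∫ θ in θs..1, calG g (psi f θ) * f θ
      = ∫ θ in θs..1, (1 - cdf f θ) * (cdf g (psi f θ) * dψ θ) := by
    have := ibp (u := fun θ => calG g (psi f θ)) (v := fun θ => -(1 - cdf f θ))
      (u' := fun θ => cdf g (psi f θ) * dψ θ) (v' := f) hθs1.le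
      (hcGcψ.mono (Set.Icc_subset_Icc (le_refl θs) (le_refl 1)))
      ((continuousOn_const.sub hcF).neg.mono (Set.Icc_subset_Icc hθs0.le (le_refl 1)))
      ((hcGψ.mul (hcdψ.mono (Set.Icc_subset_Icc hθs0.le (le_refl 1)))))
      (hcf.mono (Set.Icc_subset_Icc hθs0.le (le_refl 1)))
      hGcψd
      (by
        intro θ hθ
        have hθ' : θ ∈ Set.Ioo (0:ℝ) 1 := ⟨lt_trans hθs0 hθ.1, hθ.2⟩
        have := ((S.FDerivAt hθ').const_sub 1).neg
        exact this.congr_deriv (neg_neg _))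
    rw [S.psi_one, S.θs0, S.fOne, Gc_zero (g:=g)] at this
    rw [this]
    have hneg : ∫ (x : ℝ) in θs..1, cdf g (psi f x) * dψ x * -(1 - cdf f x)
        = - ∫ (θ : ℝ) in θs..1, (1 - cdf f θ) * (cdf g (psi f θ) * dψ θ) := by
      rw [← intervalIntegral.integral_neg]
      apply intervalIntegral.integral_congr
      intro θ hθ; ring
    rw [hneg]; ring
  -- more continuity packs
  have hsub01 : Set.Icc θs 1 ⊆ Set.Icc (0:ℝ) 1 := Set.Icc_subset_Icc hθs0.le (le_refl 1)
  have hGdψcont : ContinuousOn (fun θ => cdf g (psi f θ) * dψ θ) (Set.Icc θs 1) :=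
    hcGψ.mul (hcdψ.mono hsub01)
  have hIcont : ContinuousOn (fun θ => (1 - cdf f θ) * (cdf g (psi f θ) * dψ θ))
      (Set.Icc θs 1) := (continuousOn_const.sub (hcF.mono hsub01)).mul hGdψcont
  have hFdψcont : ContinuousOn (fun θ => (cdf f p - cdf f θ) * dψ θ) (Set.Icc (0:ℝ) 1) :=
    (continuousOn_const.sub hcF).mul hcdψ
  have h1Fdψcont : ContinuousOn (fun θ => (1 - cdf f θ) * dψ θ) (Set.Icc (0:ℝ) 1) :=
    (continuousOn_const.sub hcF).mul hcdψ
  have hfψcont : ContinuousOn (fun θ => f θ * psi f θ) (Set.Icc (0:ℝ) 1) := hcf.mul hcψ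
  -- (I-b) : calG g p = ∫_{θs..q} (G∘ψ) dψ
  have hIb : calG g p = ∫ θ in θs..q, cdf g (psi f θ) * dψ θ := by
    have := ftc2 (H := fun θ => calG g (psi f θ)) (H' := fun θ => cdf g (psi f θ) * dψ θ)
      hqmem.1.le
      (hcGcψ.mono (Set.Icc_subset_Icc (le_refl θs) hq1.le))
      (fun θ hθ => hGcψd θ ⟨hθ.1, lt_trans hθ.2 hq1⟩)
      ((hGdψcont.mono (Set.Icc_subset_Icc (le_refl θs) hq1.le)).intervalIntegrable_of_Icc
        hqmem.1.le)
    rw [hq, S.θs0, Gc_zero (g:=g)] at this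
    linarith
  -- split the total integral at q
  have hsplit : ∫ θ in θs..1, (1 - cdf f θ) * (cdf g (psi f θ) * dψ θ)
      = (∫ θ in θs..q, (1 - cdf f θ) * (cdf g (psi f θ) * dψ θ))
        + ∫ θ in q..1, (1 - cdf f θ) * (cdf g (psi f θ) * dψ θ) :=
    (intervalIntegral.integral_add_adjacent_intervals
      ((hIcont.mono (Set.Icc_subset_Icc (le_refl θs) hq1.le)).intervalIntegrable_of_Icc
        hqmem.1.le)
      ((hIcont.mono (Set.Icc_subset_Icc hqmem.1.le (le_refl 1))).intervalIntegrable_of_Icc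
        hq1.le)).symm
  -- difference formula
  have hdiff : (∫ θ in θs..1, calG g (psi f θ) * f θ) - (1 - cdf f p) * calG g p
      = (∫ θ in θs..q, (cdf f p - cdf f θ) * (cdf g (psi f θ) * dψ θ))
        + ∫ θ in q..1, (1 - cdf f θ) * (cdf g (psi f θ) * dψ θ) := by
    rw [hIa, hsplit, hIb, ← intervalIntegral.integral_const_mul]
    have hcongr : ∫ θ in θs..q, (1 - cdf f θ) * (cdf g (psi f θ) * dψ θ)
          - (1 - cdf f p) * (cdf g (psi f θ) * dψ θ)
        = ∫ θ in θs..q, (cdf f p - cdf f θ) * (cdf g (psi f θ) * dψ θ) := by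
      apply intervalIntegral.integral_congr; intro θ hθ; ring
    rw [← hcongr, intervalIntegral.integral_sub
      (f := fun θ => (1 - cdf f θ) * (cdf g (psi f θ) * dψ θ))
      (g := fun θ => (1 - cdf f p) * (cdf g (psi f θ) * dψ θ))
      ((hIcont.mono (Set.Icc_subset_Icc (le_refl θs) hq1.le)).intervalIntegrable_of_Icc
        hqmem.1.le)
      (((continuousOn_const.mul (hGdψcont.mono (Set.Icc_subset_Icc (le_refl θs) hq1.le)))
        ).intervalIntegrable_of_Icc hqmem.1.le)]
    ring
  -- (I-e) : ∫_{p..1} f ψ = p (1 - F p)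
  have hIe : ∫ θ in p..1, f θ * psi f θ = p * (1 - cdf f p) := by
    have hcg : ∀ θ ∈ Set.uIcc p 1, f θ * psi f θ = 1 * cdf f θ + θ * f θ - 1 := by
      intro θ hθ
      rw [Set.uIcc_of_le hp.2.le] at hθ
      have hθI : θ ∈ Set.Icc (0:ℝ) 1 := ⟨le_trans hp.1.le hθ.1, hθ.2⟩
      have hf0 : f θ ≠ 0 := (S.fPos θ hθI).ne'
      unfold psi; field_simp; ring
    rw [intervalIntegral.integral_congr hcg]
    have := ftc2 (H := fun θ => θ * cdf f θ - θ)
      (H' := fun θ => 1 * cdf f θ + θ * f θ - 1) hp.2.le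
      (((continuousOn_id.mul (hcF.mono (Set.Icc_subset_Icc hp.1.le (le_refl 1))))).sub
        continuousOn_id)
      (fun θ hθ => by
        have hθ' : θ ∈ Set.Ioo (0:ℝ) 1 := ⟨lt_trans hp.1 hθ.1, hθ.2⟩
        exact ((hasDerivAt_id θ).mul (S.FDerivAt hθ')).sub (hasDerivAt_id θ))
      ((((continuousOn_const.mul (hcF.mono (Set.Icc_subset_Icc hp.1.le (le_refl 1)))).add
        (continuousOn_id.mul (hcf.mono (Set.Icc_subset_Icc hp.1.le (le_refl 1))))).sub
        continuousOn_const).intervalIntegrable_of_Icc hp.2.le)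
    rw [S.fOne] at this
    rw [this]; ring
  -- split of ∫ f ψ at q
  have hsplitf : ∫ θ in p..1, f θ * psi f θ
      = (∫ θ in p..q, f θ * psi f θ) + ∫ θ in q..1, f θ * psi f θ :=
    (intervalIntegral.integral_add_adjacent_intervals
      (contOn_intInt hfψcont hpI hqI) (contOn_intInt hfψcont hqI h1I)).symm
  -- (I-c)
  have hIc : ∫ θ in p..q, (cdf f p - cdf f θ) * dψ θ
      = (cdf f p - cdf f q) * p + ∫ θ in p..q, f θ * psi f θ := by
    have hsubpq : Set.Icc p q ⊆ Set.Icc (0:ℝ) 1 := Set.Icc_subset_Icc hp.1.le hqI.2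
    have := ibp (u := fun θ => cdf f p - cdf f θ) (v := psi f)
      (u' := fun θ => -f θ) (v' := dψ) hpq
      ((continuousOn_const.sub hcF).mono hsubpq) (hcψ.mono hsubpq)
      ((hcf.neg).mono hsubpq) (hcdψ.mono hsubpq)
      (fun θ hθ => by
        have hθ' : θ ∈ Set.Ioo (0:ℝ) 1 := ⟨lt_trans hp.1 hθ.1, lt_trans hθ.2 hq1⟩
        simpa using (S.FDerivAt hθ').const_sub (cdf f p))
      (fun θ hθ => S.psiDerivAt ⟨lt_trans hp.1 hθ.1, lt_trans hθ.2 hq1⟩)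
    rw [hq] at this
    have hneg : ∫ θ in p..q, -f θ * psi f θ = - ∫ θ in p..q, f θ * psi f θ := by
      rw [← intervalIntegral.integral_neg]
      apply intervalIntegral.integral_congr; intro θ hθ; ring
    rw [hneg] at this
    rw [this]; ring
  -- (I-d)
  have hId : ∫ θ in q..1, (1 - cdf f θ) * dψ θ
      = -((1 - cdf f q) * p) + ∫ θ in q..1, f θ * psi f θ := by
    have hsubq1 : Set.Icc q 1 ⊆ Set.Icc (0:ℝ) 1 := Set.Icc_subset_Icc hqI.1 (le_refl 1)
    have := ibp (u := fun θ => 1 - cdf f θ) (v := psi f)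
      (u' := fun θ => -f θ) (v' := dψ) hq1.le
      ((continuousOn_const.sub hcF).mono hsubq1) (hcψ.mono hsubq1)
      ((hcf.neg).mono hsubq1) (hcdψ.mono hsubq1)
      (fun θ hθ => by
        have hθ' : θ ∈ Set.Ioo (0:ℝ) 1 := ⟨lt_trans (lt_trans hθs0 hqmem.1) hθ.1, hθ.2⟩
        simpa using (S.FDerivAt hθ').const_sub 1)
      (fun θ hθ => S.psiDerivAt ⟨lt_trans (lt_trans hθs0 hqmem.1) hθ.1, hθ.2⟩)
    rw [hq, S.psi_one, S.fOne] at this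
    have hneg : ∫ θ in q..1, -f θ * psi f θ = - ∫ θ in q..1, f θ * psi f θ := by
      rw [← intervalIntegral.integral_neg]
      apply intervalIntegral.integral_congr; intro θ hθ; ring
    rw [hneg] at this
    rw [this]; ring
  -- key identity K1 + K2 = 0
  have hK : (∫ θ in p..q, (cdf f p - cdf f θ) * dψ θ)
      + ∫ θ in q..1, (1 - cdf f θ) * dψ θ = 0 := by
    rw [hIc, hId]
    have h2 := hsplitf
    rw [hIe] at h2
    linarith
  -- strict inequality T3
  have hT3 : cdf g p * ∫ θ in q..1, (1 - cdf f θ) * dψ θ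
      < ∫ θ in q..1, (1 - cdf f θ) * (cdf g (psi f θ) * dψ θ) := by
    rw [← intervalIntegral.integral_const_mul]
    apply intervalIntegral.integral_lt_integral_of_continuousOn_of_le_of_exists_lt hq1
    · exact continuousOn_const.mul
        (h1Fdψcont.mono (Set.Icc_subset_Icc hqI.1 (le_refl 1)))
    · exact hIcont.mono (Set.Icc_subset_Icc hqmem.1.le (le_refl 1))
    · intro θ hθ
      have hθI : θ ∈ Set.Icc (0:ℝ) 1 := ⟨le_trans hqI.1 hθ.1.le, hθ.2⟩
      have hψle : p ≤ psi f θ := by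
        have := S.psiMonotone hqI hθI hθ.1.le; rwa [hq] at this
      have hG : cdf g p ≤ cdf g (psi f θ) :=
        S.Gmono hpI (S.psiMem ⟨le_trans hqmem.1.le hθ.1.le, hθ.2⟩) hψle
      have hF : cdf f θ ≤ 1 := S.F_le_one hθI
      have hd : 0 < dψ θ := S.dψPos θ hθI
      nlinarith [mul_nonneg (mul_nonneg (sub_nonneg.2 hG) (sub_nonneg.2 hF)) hd.le]
    · refine ⟨(q+1)/2, ⟨by linarith, by linarith⟩, ?_⟩
      have hcI : (q+1)/2 ∈ Set.Icc (0:ℝ) 1 := ⟨by linarith [hqI.1], by linarith⟩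
      have hψgt : p < psi f ((q+1)/2) := by
        have := S.psiMono hqI hcI (by linarith); rwa [hq] at this
      have hG : cdf g p < cdf g (psi f ((q+1)/2)) :=
        S.Gstrict hpI (S.psiMem ⟨by linarith [hqmem.1], by linarith⟩) hψgt
      have hF : cdf f ((q+1)/2) < 1 := S.F_lt_one hcI (by linarith)
      have hd : 0 < dψ ((q+1)/2) := S.dψPos _ hcI
      nlinarith [mul_pos (mul_pos (sub_pos.2 hG) (sub_pos.2 hF)) hd]
  set K1 := ∫ θ in p..q, (cdf f p - cdf f θ) * dψ θ with hK1def
  set K2 := ∫ θ in q..1, (1 - cdf f θ) * dψ θ with hK2def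
  have hGp0 : 0 ≤ cdf g p := S.Gnonneg hpI
  have hGpK : cdf g p * K1 + cdf g p * K2 = 0 := by rw [← mul_add, hK, mul_zero]
  rw [← sub_pos, hdiff]
  rcases le_or_gt p θs with hcase | hcase
  · -- p ≤ θs
    have hT2a : cdf g p * ∫ θ in θs..q, (cdf f p - cdf f θ) * dψ θ
        ≤ ∫ θ in θs..q, (cdf f p - cdf f θ) * (cdf g (psi f θ) * dψ θ) := by
      rw [← intervalIntegral.integral_const_mul]
      apply intervalIntegral.integral_mono_on hqmem.1.le
        ((continuousOn_const.mul (hFdψcont.mono (Set.Icc_subset_Icc hθs0.le hqI.2))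
          ).intervalIntegrable_of_Icc hqmem.1.le)
        ((((continuousOn_const.sub (hcF.mono hsub01)).mul hGdψcont).mono
          (Set.Icc_subset_Icc (le_refl θs) hq1.le)).intervalIntegrable_of_Icc hqmem.1.le)
      intro θ hθ
      have hθI : θ ∈ Set.Icc (0:ℝ) 1 := ⟨le_trans hθs0.le hθ.1, le_trans hθ.2 hqI.2⟩
      have hFle : cdf f p ≤ cdf f θ :=
        cdf_mono S.fInt S.fPos hpI hθI (le_trans hcase hθ.1)
      have hψle : psi f θ ≤ p := by
        have := S.psiMonotone hθI hqI hθ.2; rwa [hq] at this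
      have hψI : psi f θ ∈ Set.Icc (0:ℝ) 1 := S.psiMem ⟨hθ.1, le_trans hθ.2 hqI.2⟩
      have hG : cdf g (psi f θ) ≤ cdf g p := S.Gmono hψI hpI hψle
      have hGn : 0 ≤ cdf g (psi f θ) := S.Gnonneg hψI
      have hd : 0 < dψ θ := S.dψPos θ hθI
      show cdf g p * ((cdf f p - cdf f θ) * dψ θ) ≤ (cdf f p - cdf f θ) * (cdf g (psi f θ) * dψ θ)
      nlinarith [mul_nonneg (mul_nonneg (sub_nonneg.2 hG) (sub_nonneg.2 hFle)) hd.le]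
    have hK1cmp : K1 ≤ ∫ θ in θs..q, (cdf f p - cdf f θ) * dψ θ := by
      have hadj : K1 = (∫ θ in p..θs, (cdf f p - cdf f θ) * dψ θ)
          + ∫ θ in θs..q, (cdf f p - cdf f θ) * dψ θ :=
        (intervalIntegral.integral_add_adjacent_intervals
          (contOn_intInt hFdψcont hpI hθsI) (contOn_intInt hFdψcont hθsI hqI)).symm
      have hneg : (∫ θ in p..θs, (cdf f p - cdf f θ) * dψ θ) ≤ 0 := by
        have : (∫ θ in p..θs, (cdf f p - cdf f θ) * dψ θ) ≤ ∫ θ in p..θs, (0:ℝ) := by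
          apply intervalIntegral.integral_mono_on hcase
            (contOn_intInt hFdψcont hpI hθsI) (by simp)
          intro θ hθ
          have hθI : θ ∈ Set.Icc (0:ℝ) 1 := ⟨le_trans hp.1.le hθ.1, le_trans hθ.2 hθs1.le⟩
          have hFle : cdf f p ≤ cdf f θ := cdf_mono S.fInt S.fPos hpI hθI hθ.1
          have hd : 0 < dψ θ := S.dψPos θ hθI
          nlinarith [mul_nonneg (sub_nonneg.2 hFle) hd.le]
        simpa using this
      linarith
    have := mul_le_mul_of_nonneg_left hK1cmp hGp0
    linarith
  · -- θs < p
    have hsplit2 : ∫ θ in θs..q, (cdf f p - cdf f θ) * (cdf g (psi f θ) * dψ θ)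
        = (∫ θ in θs..p, (cdf f p - cdf f θ) * (cdf g (psi f θ) * dψ θ))
          + ∫ θ in p..q, (cdf f p - cdf f θ) * (cdf g (psi f θ) * dψ θ) := by
      have hcc : ContinuousOn (fun θ => (cdf f p - cdf f θ) * (cdf g (psi f θ) * dψ θ))
          (Set.Icc θs 1) := (continuousOn_const.sub (hcF.mono hsub01)).mul hGdψcont
      exact (intervalIntegral.integral_add_adjacent_intervals
        ((hcc.mono (Set.Icc_subset_Icc (le_refl θs) hpI.2)).intervalIntegrable_of_Icc hcase.le)
        ((hcc.mono (Set.Icc_subset_Icc hcase.le hqI.2)).intervalIntegrable_of_Icc hpq)).symm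
    have hT1 : 0 ≤ ∫ θ in θs..p, (cdf f p - cdf f θ) * (cdf g (psi f θ) * dψ θ) := by
      apply intervalIntegral.integral_nonneg hcase.le
      intro θ hθ
      have hθI : θ ∈ Set.Icc (0:ℝ) 1 := ⟨le_trans hθs0.le hθ.1, le_trans hθ.2 hpI.2⟩
      have hFle : cdf f θ ≤ cdf f p := cdf_mono S.fInt S.fPos hθI hpI hθ.2
      have hψI : psi f θ ∈ Set.Icc (0:ℝ) 1 := S.psiMem ⟨hθ.1, le_trans hθ.2 hpI.2⟩
      have hGn : 0 ≤ cdf g (psi f θ) := S.Gnonneg hψI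
      have hd : 0 < dψ θ := S.dψPos θ hθI
      exact mul_nonneg (sub_nonneg.2 hFle) (mul_nonneg hGn hd.le)
    have hT2 : cdf g p * K1 ≤ ∫ θ in p..q, (cdf f p - cdf f θ) * (cdf g (psi f θ) * dψ θ) := by
      rw [hK1def, ← intervalIntegral.integral_const_mul]
      apply intervalIntegral.integral_mono_on hpq
        ((continuousOn_const.mul (hFdψcont.mono (Set.Icc_subset_Icc hpI.1 hqI.2))
          ).intervalIntegrable_of_Icc hpq)
        ((((continuousOn_const.sub (hcF.mono hsub01)).mul hGdψcont).mono
          (Set.Icc_subset_Icc hcase.le hqI.2)).intervalIntegrable_of_Icc hpq)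
      intro θ hθ
      have hθI : θ ∈ Set.Icc (0:ℝ) 1 := ⟨le_trans hpI.1 hθ.1, le_trans hθ.2 hqI.2⟩
      have hFle : cdf f p ≤ cdf f θ := cdf_mono S.fInt S.fPos hpI hθI hθ.1
      have hψle : psi f θ ≤ p := by
        have := S.psiMonotone hθI hqI hθ.2; rwa [hq] at this
      have hψI : psi f θ ∈ Set.Icc (0:ℝ) 1 :=
        S.psiMem ⟨le_trans hcase.le hθ.1, le_trans hθ.2 hqI.2⟩
      have hG : cdf g (psi f θ) ≤ cdf g p := S.Gmono hψI hpI hψle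
      have hGn : 0 ≤ cdf g (psi f θ) := S.Gnonneg hψI
      have hd : 0 < dψ θ := S.dψPos θ hθI
      show cdf g p * ((cdf f p - cdf f θ) * dψ θ) ≤ (cdf f p - cdf f θ) * (cdf g (psi f θ) * dψ θ)
      nlinarith [mul_nonneg (mul_nonneg (sub_nonneg.2 hG) (sub_nonneg.2 hFle)) hd.le]
    rw [hsplit2]
    linarith

/-- `𝒢(1) = 1 - μ`. -/
lemma Gc_one : calG g 1 = 1 - muG g := by
  have h01 : (0:ℝ) ≤ 1 := zero_le_one
  have hibp := ibp (u := cdf g) (v := fun y => y) (u' := g) (v' := fun _ => (1:ℝ)) h01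
    S.Gcont continuousOn_id S.gCont continuousOn_const
    (fun y hy => cdf_hasDerivAt S.gInt S.gCont hy)
    (fun y _ => hasDerivAt_id y)
  have h1 : calG g 1 = ∫ y in (0:ℝ)..1, cdf g y := cdf_eq_intervalIntegral (cdf g) h01
  have h2 : ∫ y in (0:ℝ)..1, cdf g y = ∫ y in (0:ℝ)..1, cdf g y * 1 := by
    apply intervalIntegral.integral_congr; intro y _; ring
  have h3 : ∫ y in (0:ℝ)..1, g y * y = muG g := by
    rw [show muG g = ∫ t in (0:ℝ)..1, t * g t from
      (intervalIntegral.integral_of_le h01).symm]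
    apply intervalIntegral.integral_congr; intro y _; ring
  rw [h3, S.gOne, cdf_zero] at hibp
  rw [h1, h2, hibp]; ring

lemma mu_lt_one : muG g < 1 := by
  have hGc1 : 0 < calG g 1 := by
    have : calG g 1 = ∫ y in (0:ℝ)..1, cdf g y := cdf_eq_intervalIntegral (cdf g) zero_le_one
    rw [this]
    apply intervalIntegral_pos_of_pos_on
      (contOn_intInt S.Gcont ⟨le_refl 0, zero_le_one⟩ ⟨zero_le_one, le_refl 1⟩)
    · intro y hy
      have := cdf_strict S.gInt S.gPos ⟨le_refl 0, zero_le_one⟩ ⟨hy.1.le, hy.2.le⟩ hy.1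
      rwa [cdf_zero] at this
    · exact zero_lt_one
  have := S.Gc_one; linarith

lemma mu_pos : 0 < muG g := by
  have h : muG g = ∫ t in (0:ℝ)..1, t * g t := (intervalIntegral.integral_of_le zero_le_one).symm
  rw [h]
  apply intervalIntegral_pos_of_pos_on
    ((continuousOn_id.mul S.gCont).intervalIntegrable_of_Icc zero_le_one)
  · intro y hy
    exact mul_pos hy.1 (S.gPos y ⟨hy.1.le, hy.2.le⟩)
  · exact zero_lt_one

/-- `G(b) - G(a) ≤ M (b - a)` whenever `g ≤ M` on `[0,1]`. -/
lemma cdf_lip {M : ℝ} (hM : ∀ t ∈ Set.Icc (0:ℝ) 1, g t ≤ M) {a b : ℝ}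
    (ha : a ∈ Set.Icc (0:ℝ) 1) (hb : b ∈ Set.Icc (0:ℝ) 1) (hab : a ≤ b) :
    cdf g b - cdf g a ≤ M * (b - a) := by
  rw [cdf_sub S.gInt ha hb]
  have h2 : ∫ _ in a..b, M = M * (b - a) := by
    rw [intervalIntegral.integral_const, smul_eq_mul]; ring
  rw [← h2]
  apply intervalIntegral.integral_mono_on hab (contOn_intInt S.gCont ha hb) (by simp)
  intro u hu
  exact hM u ⟨le_trans ha.1 hu.1, le_trans hu.2 hb.2⟩

lemma G_le {M : ℝ} (hM : ∀ t ∈ Set.Icc (0:ℝ) 1, g t ≤ M) {y : ℝ}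
    (hy : y ∈ Set.Icc (0:ℝ) 1) : cdf g y ≤ M * y := by
  have := S.cdf_lip hM ⟨le_refl 0, zero_le_one⟩ hy hy.1
  rwa [cdf_zero, sub_zero, sub_zero] at this

lemma F_lip {Mf : ℝ} (hM : ∀ t ∈ Set.Icc (0:ℝ) 1, f t ≤ Mf) {a b : ℝ}
    (ha : a ∈ Set.Icc (0:ℝ) 1) (hb : b ∈ Set.Icc (0:ℝ) 1) (hab : a ≤ b) :
    cdf f b - cdf f a ≤ Mf * (b - a) := by
  rw [cdf_sub S.fInt ha hb]
  have h2 : ∫ _ in a..b, Mf = Mf * (b - a) := by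
    rw [intervalIntegral.integral_const, smul_eq_mul]; ring
  rw [← h2]
  apply intervalIntegral.integral_mono_on hab (contOn_intInt S.fCont ha hb) (by simp)
  intro u hu
  exact hM u ⟨le_trans ha.1 hu.1, le_trans hu.2 hb.2⟩

set_option maxHeartbeats 1600000 in
/-- For each `δ ∈ [0,1)` there is an `x` whose dynamic profit beats `δ · A`. -/
theorem exists_beats (θss : ℝ → ℝ)
    (hθss : ∀ x ∈ Set.Ioc (0:ℝ) 1, θss x ∈ Set.Ioo 0 x ∧ psiT f x (θss x) = 0)
    (hpsiTd : ∀ x ∈ Set.Ioc (0:ℝ) 1, ∃ d : ℝ → ℝ, ContinuousOn d (Set.Icc 0 x) ∧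
      ∀ θ ∈ Set.Icc (0:ℝ) x, 0 < d θ ∧ HasDerivWithinAt (psiT f x) (d θ) (Set.Icc 0 x) θ)
    {δ : ℝ} (hδ0 : 0 ≤ δ) (hδ1 : δ < 1) :
    ∃ x ∈ Set.Icc (0:ℝ) 1,
      δ * (∫ θ in θs..1, calG g (psi f θ) * f θ) < PiD f g θss x δ := by
  have hθs0 : (0:ℝ) < θs := S.θsMem.1
  have hθs1 : θs < 1 := S.θsMem.2
  have hθsI : θs ∈ Set.Icc (0:ℝ) 1 := ⟨hθs0.le, hθs1.le⟩
  have h1I : (1:ℝ) ∈ Set.Icc (0:ℝ) 1 := ⟨zero_le_one, le_refl 1⟩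
  -- bounds on f and g
  obtain ⟨tM, htM, hgmax⟩ := isCompact_Icc.exists_isMaxOn (Set.nonempty_Icc.2 zero_le_one) S.gCont
  set M := g tM with hMdef
  have hM : ∀ t ∈ Set.Icc (0:ℝ) 1, g t ≤ M := fun t ht => hgmax ht
  have hMpos : 0 < M := S.gPos tM htM
  obtain ⟨tF, htF, hfmax⟩ := isCompact_Icc.exists_isMaxOn (Set.nonempty_Icc.2 zero_le_one) S.fCont
  set Mf := f tF with hMfdef
  have hMf : ∀ t ∈ Set.Icc (0:ℝ) 1, f t ≤ Mf := fun t ht => hfmax ht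
  have hMfpos : 0 < Mf := S.fPos tF htF
  obtain ⟨tm, htm, hfmin⟩ := isCompact_Icc.exists_isMinOn (Set.nonempty_Icc.2 zero_le_one) S.fCont
  set fm := f tm with hfmdef
  have hfm : ∀ t ∈ Set.Icc (0:ℝ) 1, fm ≤ f t := fun t ht => hfmin ht
  have hfmpos : 0 < fm := S.fPos tm htm
  set μ := muG g with hμdef
  have hμ1 : μ < 1 := S.mu_lt_one
  set c := 2 * M * Mf / fm with hcdef
  have hc0 : 0 < c := by positivity
  -- choice of ε and x
  set ε := min ((1 - θs)/2) ((1 - δ) * (1 - μ) / (2 * (1 + c))) with hεdef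
  have hεpos : 0 < ε := by
    apply lt_min (by linarith)
    have h1 : 0 < (1 - δ) * (1 - μ) := mul_pos (by linarith) (by linarith)
    positivity
  set x := 1 - ε with hxdef
  have hεle1 : ε ≤ (1 - θs)/2 := min_le_left _ _
  have hεle2 : ε ≤ (1 - δ) * (1 - μ) / (2 * (1 + c)) := min_le_right _ _
  have hθsx : θs < x := by
    have : ε < 1 - θs := lt_of_le_of_lt hεle1 (by linarith)
    simp only [hxdef]; linarith
  have hx1 : x < 1 := by simp only [hxdef]; linarith
  have hx0 : 0 < x := lt_trans hθs0 hθsx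
  have hxI : x ∈ Set.Icc (0:ℝ) 1 := ⟨hx0.le, hx1.le⟩
  have hxIoc : x ∈ Set.Ioc (0:ℝ) 1 := ⟨hx0, hx1.le⟩
  set B := 1 - cdf f x with hBdef
  have hBpos : 0 < B := by
    have := S.F_lt_one hxI hx1; simp only [hBdef]; linarith
  have hBle : B ≤ Mf * ε := by
    have := S.F_lip hMf hxI h1I hx1.le
    rw [S.fOne] at this
    simp only [hBdef, hxdef] at *
    linarith
  -- the bracket is positive
  have hbr : 0 < (x - μ) - δ * (1 - μ) - δ * B * (2 * M / fm) := by
    have h1 : δ * B * (2 * M / fm) ≤ c * ε := by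
      have h2 : δ * B ≤ B := by linarith [mul_nonneg (sub_nonneg.2 hδ1.le) hBpos.le]
      have h3 : δ * B * (2 * M / fm) ≤ B * (2 * M / fm) :=
        mul_le_mul_of_nonneg_right h2 (by positivity)
      have h4 : B * (2 * M / fm) ≤ (Mf * ε) * (2 * M / fm) :=
        mul_le_mul_of_nonneg_right hBle (by positivity)
      have h5 : (Mf * ε) * (2 * M / fm) = c * ε := by
        simp only [hcdef]; field_simp
      linarith
    have h6 : ε * (2 * (1 + c)) ≤ (1 - δ) * (1 - μ) := by
      have h7 : 0 < 2 * (1 + c) := by linarith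
      calc ε * (2 * (1 + c)) ≤ ((1 - δ) * (1 - μ) / (2 * (1 + c))) * (2 * (1 + c)) :=
            mul_le_mul_of_nonneg_right hεle2 h7.le
        _ = (1 - δ) * (1 - μ) := by field_simp
    have hx' : x - μ = (1 - μ) - ε := by simp only [hxdef]; ring
    have h8 : 0 < ε * c := mul_pos hεpos hc0
    linarith [h1, h6, hx', hεpos, h8]
  -- data at x
  obtain ⟨htmem, ht0⟩ := hθss x hxIoc
  obtain ⟨dx, hdxc, hdxp⟩ := hpsiTd x hxIoc
  set t := θss x with htdef
  have ht0x : 0 < t := htmem.1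
  have htx : t < x := htmem.2
  have hsubx1 : Set.Icc (0:ℝ) x ⊆ Set.Icc (0:ℝ) 1 := Set.Icc_subset_Icc (le_refl 0) hx1.le
  have hψxcont : ContinuousOn (psiT f x) (Set.Icc 0 x) :=
    fun θ hθ => (hdxp θ hθ).2.continuousWithinAt
  have hψxmono : StrictMonoOn (psiT f x) (Set.Icc 0 x) := by
    apply strictMonoOn_of_hasDerivWithinAt_pos (convex_Icc 0 x) hψxcont
    · intro θ hθ
      rw [interior_Icc] at hθ
      exact ((hdxp θ (Set.Ioo_subset_Icc_self hθ)).2).mono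
        (by rw [interior_Icc]; exact Set.Ioo_subset_Icc_self)
    · intro θ hθ
      rw [interior_Icc] at hθ
      exact (hdxp θ (Set.Ioo_subset_Icc_self hθ)).1
  have hψxx : psiT f x x = x := by
    unfold psiT; rw [sub_self, zero_div, sub_zero]
  have htIx : t ∈ Set.Icc (0:ℝ) x := ⟨ht0x.le, htx.le⟩
  have hθsIx : θs ∈ Set.Icc (0:ℝ) x := ⟨hθs0.le, hθsx.le⟩
  have hψxRel : ∀ θ ∈ Set.Icc (0:ℝ) 1, psiT f x θ = psi f θ + (1 - cdf f x)/f θ := by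
    intro θ hθ
    have hf0 : f θ ≠ 0 := (S.fPos θ hθ).ne'
    unfold psi psiT; field_simp; ring
  have hψxθs : psiT f x θs = (1 - cdf f x)/f θs := by
    rw [hψxRel θs hθsI, S.θs0]; ring
  have htθs : t ≤ θs := by
    by_contra hcon
    push_neg at hcon
    have h1 := hψxmono hθsIx htIx hcon
    rw [ht0, hψxθs] at h1
    have h2 : 0 ≤ (1 - cdf f x)/f θs := by
      have := S.fPos θs hθsI; positivity
    linarith
  have hψxmem : ∀ θ ∈ Set.Icc t x, psiT f x θ ∈ Set.Icc 0 x := by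
    intro θ hθ
    have hθIx : θ ∈ Set.Icc (0:ℝ) x := ⟨le_trans ht0x.le hθ.1, hθ.2⟩
    constructor
    · have := hψxmono.monotoneOn htIx hθIx hθ.1; rwa [ht0] at this
    · have := hψxmono.monotoneOn hθIx ⟨hx0.le, le_refl x⟩ hθ.2; rwa [hψxx] at this
  have hψxmem1 : ∀ θ ∈ Set.Icc t x, psiT f x θ ∈ Set.Icc (0:ℝ) 1 :=
    fun θ hθ => hsubx1 (hψxmem θ hθ)
  -- continuity packs
  have hsubtx01 : Set.Icc t x ⊆ Set.Icc (0:ℝ) 1 :=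
    Set.Icc_subset_Icc ht0x.le hx1.le
  have hcGcψx : ContinuousOn (fun θ => calG g (psiT f x θ)) (Set.Icc t x) :=
    S.GcCont.comp (hψxcont.mono (Set.Icc_subset_Icc ht0x.le (le_refl x))) hψxmem1
  have hcGψx : ContinuousOn (fun θ => cdf g (psiT f x θ)) (Set.Icc t x) :=
    S.Gcont.comp (hψxcont.mono (Set.Icc_subset_Icc ht0x.le (le_refl x))) hψxmem1
  have hcGcψxf : ContinuousOn (fun θ => calG g (psiT f x θ) * f θ) (Set.Icc t x) :=
    hcGcψx.mul (S.fCont.mono hsubtx01)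
  have hsubθs1 : Set.Icc θs 1 ⊆ Set.Icc (0:ℝ) 1 := Set.Icc_subset_Icc hθs0.le (le_refl 1)
  have hmapsψ : Set.MapsTo (psi f) (Set.Icc θs 1) (Set.Icc (0:ℝ) 1) := fun θ hθ => S.psiMem hθ
  have hcGcψ : ContinuousOn (fun θ => calG g (psi f θ)) (Set.Icc θs 1) :=
    S.GcCont.comp (S.psiCont.mono hsubθs1) hmapsψ
  have hcGψ : ContinuousOn (fun θ => cdf g (psi f θ)) (Set.Icc θs 1) :=
    S.Gcont.comp (S.psiCont.mono hsubθs1) hmapsψ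
  have hcGcψf : ContinuousOn (fun θ => calG g (psi f θ) * f θ) (Set.Icc θs 1) :=
    hcGcψ.mul (S.fCont.mono hsubθs1)
  set A := ∫ θ in θs..1, calG g (psi f θ) * f θ with hAdef
  set D := ∫ θ in t..x, calG g (psiT f x θ) * f θ with hDdef
  set C := ∫ θ in t..x, cdf g (psiT f x θ) with hCdef
  set C1 := ∫ θ in θs..x, cdf g (psi f θ) with hC1def
  -- (E1)+(E2) : lower bound for D
  have hDsplit : D = (∫ θ in t..θs, calG g (psiT f x θ) * f θ)
      + ∫ θ in θs..x, calG g (psiT f x θ) * f θ :=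
    (intervalIntegral.integral_add_adjacent_intervals
      ((hcGcψxf.mono (Set.Icc_subset_Icc (le_refl t) hθsx.le)).intervalIntegrable_of_Icc htθs)
      ((hcGcψxf.mono (Set.Icc_subset_Icc htθs (le_refl x))).intervalIntegrable_of_Icc
        hθsx.le)).symm
  have hD1 : 0 ≤ ∫ θ in t..θs, calG g (psiT f x θ) * f θ := by
    apply intervalIntegral.integral_nonneg htθs
    intro θ hθ
    have hθtx : θ ∈ Set.Icc t x := ⟨hθ.1, le_trans hθ.2 hθsx.le⟩
    exact mul_nonneg (S.Gc_nonneg (hψxmem1 θ hθtx))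
      (S.fPos θ (hsubtx01 hθtx)).le
  have hD2 : (∫ θ in θs..x, (calG g (psi f θ) * f θ + cdf g (psi f θ) * (1 - cdf f x)))
      ≤ ∫ θ in θs..x, calG g (psiT f x θ) * f θ := by
    apply intervalIntegral.integral_mono_on hθsx.le
    · exact ((hcGcψf.mono (Set.Icc_subset_Icc (le_refl θs) hx1.le)).add
        ((hcGψ.mono (Set.Icc_subset_Icc (le_refl θs) hx1.le)).mul
          continuousOn_const)).intervalIntegrable_of_Icc hθsx.le
    · exact (hcGcψxf.mono (Set.Icc_subset_Icc htθs (le_refl x))).intervalIntegrable_of_Icc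
        hθsx.le
    intro θ hθ
    have hθI : θ ∈ Set.Icc (0:ℝ) 1 := ⟨le_trans hθs0.le hθ.1, le_trans hθ.2 hx1.le⟩
    have hθtx : θ ∈ Set.Icc t x := ⟨le_trans htθs hθ.1, hθ.2⟩
    have hfθ : 0 < f θ := S.fPos θ hθI
    have haI : psi f θ ∈ Set.Icc (0:ℝ) 1 := S.psiMem ⟨hθ.1, hθI.2⟩
    have hbI : psiT f x θ ∈ Set.Icc (0:ℝ) 1 := hψxmem1 θ hθtx
    have hab : psi f θ ≤ psiT f x θ := by
      rw [hψxRel θ hθI]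
      have : 0 ≤ (1 - cdf f x)/f θ := by positivity
      linarith
    have hgrad := S.Gc_grad haI hbI hab
    have hba : psiT f x θ - psi f θ = (1 - cdf f x)/f θ := by
      rw [hψxRel θ hθI]; ring
    rw [hba] at hgrad
    have h2 := mul_le_mul_of_nonneg_right hgrad hfθ.le
    have h3 : cdf g (psi f θ) * ((1 - cdf f x)/f θ) * f θ
        = cdf g (psi f θ) * (1 - cdf f x) := by
      field_simp
    rw [h3] at h2
    linarith [h2]
  have hD2' : (∫ θ in θs..x, calG g (psi f θ) * f θ) + B * C1 ≤ D := by
    rw [hBdef]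
    have hadd : ∫ θ in θs..x, (calG g (psi f θ) * f θ + cdf g (psi f θ) * (1 - cdf f x))
        = (∫ θ in θs..x, calG g (psi f θ) * f θ)
          + ∫ θ in θs..x, cdf g (psi f θ) * (1 - cdf f x) := by
      apply intervalIntegral.integral_add
      · exact (hcGcψf.mono (Set.Icc_subset_Icc (le_refl θs) hx1.le)).intervalIntegrable_of_Icc
          hθsx.le
      · exact ((hcGψ.mono (Set.Icc_subset_Icc (le_refl θs) hx1.le)).mul
          continuousOn_const).intervalIntegrable_of_Icc hθsx.le
    have hmul : ∫ θ in θs..x, cdf g (psi f θ) * (1 - cdf f x) = C1 * (1 - cdf f x) :=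
      intervalIntegral.integral_mul_const _ _
    rw [hadd, hmul] at hD2
    rw [hDsplit]
    linarith [hD2, hD1]
  -- (E3)
  have hAsplit : A = (∫ θ in θs..x, calG g (psi f θ) * f θ)
      + ∫ θ in x..1, calG g (psi f θ) * f θ :=
    (intervalIntegral.integral_add_adjacent_intervals
      ((hcGcψf.mono (Set.Icc_subset_Icc (le_refl θs) hx1.le)).intervalIntegrable_of_Icc
        hθsx.le)
      ((hcGcψf.mono (Set.Icc_subset_Icc hθsx.le (le_refl 1))).intervalIntegrable_of_Icc
        hx1.le)).symm
  have hA2 : ∫ θ in x..1, calG g (psi f θ) * f θ ≤ (1 - μ) * B := by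
    have hstep : ∫ θ in x..1, calG g (psi f θ) * f θ ≤ ∫ θ in x..1, (1 - μ) * f θ := by
      apply intervalIntegral.integral_mono_on hx1.le
      · exact (hcGcψf.mono (Set.Icc_subset_Icc hθsx.le (le_refl 1))).intervalIntegrable_of_Icc
          hx1.le
      · exact (continuousOn_const.mul
          (S.fCont.mono (Set.Icc_subset_Icc hx0.le (le_refl 1)))).intervalIntegrable_of_Icc hx1.le
      intro θ hθ
      have hθI : θ ∈ Set.Icc (0:ℝ) 1 := ⟨le_trans hx0.le hθ.1, hθ.2⟩
      have hψI : psi f θ ∈ Set.Icc (0:ℝ) 1 := S.psiMem ⟨le_trans hθsx.le hθ.1, hθ.2⟩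
      have hGcle : calG g (psi f θ) ≤ 1 - μ := by
        have h1 : calG g (psi f θ) ≤ calG g 1 := S.Gc_mono hψI h1I hψI.2
        rw [S.Gc_one] at h1; exact h1
      exact mul_le_mul_of_nonneg_right hGcle (S.fPos θ hθI).le
    have heval : ∫ θ in x..1, (1 - μ) * f θ = (1 - μ) * B := by
      rw [intervalIntegral.integral_const_mul]
      have := cdf_sub S.fInt hxI h1I
      rw [S.fOne] at this
      simp only [hBdef]
      rw [← this]
    linarith
  -- (E4) : upper bound for C
  set K := M * (1 - cdf f x) / fm with hKdef
  have hK0 : 0 ≤ K := by positivity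
  have hCsplit : C = (∫ θ in t..θs, cdf g (psiT f x θ))
      + ∫ θ in θs..x, cdf g (psiT f x θ) :=
    (intervalIntegral.integral_add_adjacent_intervals
      ((hcGψx.mono (Set.Icc_subset_Icc (le_refl t) hθsx.le)).intervalIntegrable_of_Icc htθs)
      ((hcGψx.mono (Set.Icc_subset_Icc htθs (le_refl x))).intervalIntegrable_of_Icc
        hθsx.le)).symm
  have hC1b : ∫ θ in t..θs, cdf g (psiT f x θ) ≤ K := by
    have hstep : ∫ θ in t..θs, cdf g (psiT f x θ) ≤ ∫ _ in t..θs, K := by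
      apply intervalIntegral.integral_mono_on htθs
        ((hcGψx.mono (Set.Icc_subset_Icc (le_refl t) hθsx.le)).intervalIntegrable_of_Icc htθs)
        (by simp)
      intro θ hθ
      have hθtx : θ ∈ Set.Icc t x := ⟨hθ.1, le_trans hθ.2 hθsx.le⟩
      have hθIx : θ ∈ Set.Icc (0:ℝ) x := ⟨le_trans ht0x.le hθ.1, le_trans hθ.2 hθsx.le⟩
      have h1 : cdf g (psiT f x θ) ≤ cdf g (psiT f x θs) := by
        apply S.Gmono (hψxmem1 θ hθtx) (hψxmem1 θs ⟨htθs, hθsx.le⟩)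
        exact hψxmono.monotoneOn hθIx hθsIx hθ.2
      have h2 : cdf g (psiT f x θs) ≤ M * ((1 - cdf f x)/f θs) := by
        rw [hψxθs]
        apply S.G_le hM
        rw [← hψxθs]
        exact hψxmem1 θs ⟨htθs, hθsx.le⟩
      have h3 : M * ((1 - cdf f x)/f θs) ≤ K := by
        rw [hKdef]
        rw [mul_div_assoc]
        apply mul_le_mul_of_nonneg_left _ hMpos.le
        apply div_le_div_of_nonneg_left hBpos.le hfmpos (hfm θs hθsI)
      linarith
    have heval : ∫ _ in t..θs, K = K * (θs - t) := by
      rw [intervalIntegral.integral_const, smul_eq_mul]; ring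
    rw [heval] at hstep
    have h9 : 0 ≤ K * (1 - (θs - t)) :=
      mul_nonneg hK0 (by linarith [ht0x.le, hθs1.le])
    linarith [hstep, h9]
  have hC2b : ∫ θ in θs..x, cdf g (psiT f x θ) ≤ C1 + K := by
    have hstep : ∫ θ in θs..x, cdf g (psiT f x θ) ≤ ∫ θ in θs..x, (cdf g (psi f θ) + K) := by
      apply intervalIntegral.integral_mono_on hθsx.le
        ((hcGψx.mono (Set.Icc_subset_Icc htθs (le_refl x))).intervalIntegrable_of_Icc hθsx.le)
        (((hcGψ.mono (Set.Icc_subset_Icc (le_refl θs) hx1.le)).add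
          continuousOn_const).intervalIntegrable_of_Icc hθsx.le)
      intro θ hθ
      have hθI : θ ∈ Set.Icc (0:ℝ) 1 := ⟨le_trans hθs0.le hθ.1, le_trans hθ.2 hx1.le⟩
      have hθtx : θ ∈ Set.Icc t x := ⟨le_trans htθs hθ.1, hθ.2⟩
      have haI : psi f θ ∈ Set.Icc (0:ℝ) 1 := S.psiMem ⟨hθ.1, hθI.2⟩
      have hbI : psiT f x θ ∈ Set.Icc (0:ℝ) 1 := hψxmem1 θ hθtx
      have hab : psi f θ ≤ psiT f x θ := by
        rw [hψxRel θ hθI]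
        have : 0 ≤ (1 - cdf f x)/f θ := by
          have := S.fPos θ hθI; positivity
        linarith
      have hlip := S.cdf_lip hM haI hbI hab
      have hba : psiT f x θ - psi f θ = (1 - cdf f x)/f θ := by
        rw [hψxRel θ hθI]; ring
      rw [hba] at hlip
      have h3 : M * ((1 - cdf f x)/f θ) ≤ K := by
        rw [hKdef, mul_div_assoc]
        apply mul_le_mul_of_nonneg_left _ hMpos.le
        apply div_le_div_of_nonneg_left hBpos.le hfmpos (hfm θ hθI)
      show cdf g (psiT f x θ) ≤ cdf g (psi f θ) + K
      linarith
    have heval : ∫ θ in θs..x, (cdf g (psi f θ) + K) = C1 + K * (x - θs) := by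
      rw [intervalIntegral.integral_add
        ((hcGψ.mono (Set.Icc_subset_Icc (le_refl θs) hx1.le)).intervalIntegrable_of_Icc
          hθsx.le) (by simp)]
      rw [intervalIntegral.integral_const, smul_eq_mul]
      ring
    rw [heval] at hstep
    have h9 : 0 ≤ K * (1 - (x - θs)) :=
      mul_nonneg hK0 (by linarith [hθs0.le, hx1.le])
    linarith [hstep, h9]
  have hC : C ≤ C1 + B * (2 * M / fm) := by
    have h2K : K + K = B * (2 * M / fm) := by
      rw [hKdef, hBdef]; field_simp; ring
    rw [hCsplit]
    linarith
  -- assemble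
  refine ⟨x, hxI, ?_⟩
  have hPiD : PiD f g θss x δ = (1 - cdf f x) * (x - δ * C - μ) + δ * D := by
    simp only [PiD, if_neg (ne_of_gt hx0)]
    rfl
  have hDlow : A - (1 - μ) * B + B * C1 ≤ D := by
    linarith [hA2, hD2', hAsplit]
  have h1 : δ * (A - (1 - μ) * B + B * C1) ≤ δ * D := mul_le_mul_of_nonneg_left hDlow hδ0
  have h2 : δ * (B * C) ≤ δ * (B * (C1 + B * (2 * M / fm))) :=
    mul_le_mul_of_nonneg_left (mul_le_mul_of_nonneg_left hC hBpos.le) hδ0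
  have hring : PiD f g θss x δ - δ * A
      = B * ((x - μ) - δ * (1 - μ) - δ * B * (2 * M / fm))
        + (δ * D - δ * (A - (1 - μ) * B + B * C1))
        + (δ * (B * (C1 + B * (2 * M / fm))) - δ * (B * C)) := by
    rw [hPiD, hBdef]
    ring
  have hfinal := mul_pos hBpos hbr
  have s1 : 0 ≤ δ * D - δ * (A - (1 - μ) * B + B * C1) := by linarith [h1]
  have s2 : 0 ≤ δ * (B * (C1 + B * (2 * M / fm))) - δ * (B * C) := by linarith [h2]
  clear_value A D C C1 K B t x ε c μ fm Mf M
  linarith [hring, hfinal, s1, s2]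

lemma Gc_pos {y : ℝ} (hy0 : 0 < y) (hy1 : y ≤ 1) : 0 < calG g y := by
  have h := S.Gc_sub (a := 0) (b := y) ⟨le_refl 0, zero_le_one⟩ ⟨hy0.le, hy1⟩
  rw [Gc_zero (g:=g), sub_zero] at h
  rw [h]
  apply intervalIntegral_pos_of_pos_on
    (contOn_intInt S.Gcont ⟨le_refl 0, zero_le_one⟩ ⟨hy0.le, hy1⟩)
  · intro u hu
    have := cdf_strict S.gInt S.gPos ⟨le_refl 0, zero_le_one⟩ ⟨hu.1.le, le_trans hu.2.le hy1⟩ hu.1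
    rwa [cdf_zero] at this
  · exact hy0

/-- `x - μ < 𝒢(x)` for `x ∈ [0,1)`. -/
lemma lt_Gc {x : ℝ} (hx0 : 0 ≤ x) (hx1 : x < 1) : x - muG g < calG g x := by
  have h1 : calG g 1 - calG g x = ∫ y in x..1, cdf g y :=
    S.Gc_sub ⟨hx0, hx1.le⟩ ⟨zero_le_one, le_refl 1⟩
  have h2 : (∫ y in x..1, cdf g y) < ∫ y in x..1, (1:ℝ) := by
    apply intervalIntegral.integral_lt_integral_of_continuousOn_of_le_of_exists_lt hx1
      (S.Gcont.mono (Set.Icc_subset_Icc hx0 (le_refl 1))) continuousOn_const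
    · intro y hy
      exact cdf_le_one S.gInt S.gPos S.gOne ⟨le_trans hx0 hy.1.le, hy.2⟩
    · refine ⟨(x+1)/2, ⟨by linarith, by linarith⟩, ?_⟩
      exact cdf_lt_one S.gInt S.gPos S.gOne ⟨by linarith, by linarith⟩ (by linarith)
  have h3 : ∫ y in x..1, (1:ℝ) = 1 - x := by
    rw [intervalIntegral.integral_const, smul_eq_mul]; ring
  have h4 := S.Gc_one
  rw [h3] at h2; linarith

/-- At `δ = 0`, every dynamic profit is strictly below the optimal ex-ante profit. -/
lemma PiD_zero_lt (θss : ℝ → ℝ) {piEAO : ℝ}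
    (hub : ∀ p ∈ Set.Icc (0:ℝ) 1, (1 - cdf f p) * calG g p ≤ piEAO)
    (hpos : 0 < piEAO) {x : ℝ} (hx : x ∈ Set.Icc (0:ℝ) 1) :
    PiD f g θss x 0 < piEAO := by
  rcases eq_or_ne x 0 with hx0 | hx0
  · subst hx0
    have hv : PiD f g θss 0 0 = -(muG g) := by unfold PiD; simp
    rw [hv]
    have := S.mu_pos
    linarith
  · have hval : PiD f g θss x 0 = (1 - cdf f x) * (x - muG g) := by
      simp only [PiD, if_neg hx0]
      ring
    rw [hval]
    rcases lt_or_eq_of_le hx.2 with hx1 | hx1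
    · have hF : cdf f x < 1 := S.F_lt_one hx hx1
      have hlt : x - muG g < calG g x := S.lt_Gc hx.1 hx1
      have h1 : (1 - cdf f x) * (x - muG g) < (1 - cdf f x) * calG g x :=
        mul_lt_mul_of_pos_left hlt (by linarith)
      exact lt_of_lt_of_le h1 (hub x hx)
    · subst hx1
      rw [S.fOne]
      simpa using hpos

/-- At `x = 1` the dynamic profit equals `δ` times the sequential-screening constant. -/
lemma PiD_at_one (θss : ℝ → ℝ) (hθ1 : θss 1 ∈ Set.Ioo (0:ℝ) 1)
    (h01 : psiT f 1 (θss 1) = 0) (δ : ℝ) :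
    PiD f g θss 1 δ = δ * ∫ θ in θs..1, calG g (psi f θ) * f θ := by
  have hpsiT1 : psiT f 1 = psi f := by
    funext θ; unfold psiT psi; rw [S.fOne]
  have hθeq : θss 1 = θs := by
    have h2 : psi f (θss 1) = 0 := by rw [← hpsiT1]; exact h01
    exact S.psiMono.injOn ⟨hθ1.1.le, hθ1.2.le⟩ ⟨S.θsMem.1.le, S.θsMem.2.le⟩
      (h2.trans S.θs0.symm)
  simp only [PiD, if_neg (one_ne_zero), hpsiT1, hθeq, S.fOne]
  ring

omit S in
/-- Affinity of `PiD` in `δ`. -/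
lemma PiD_affine (θss : ℝ → ℝ) (x : ℝ) {a b δ1 δ2 : ℝ} (hab : a + b = 1) :
    PiD f g θss x (a * δ1 + b * δ2) = a * PiD f g θss x δ1 + b * PiD f g θss x δ2 := by
  unfold PiD
  by_cases hx : x = 0
  · simp only [if_pos hx]
    linear_combination (muG g) * hab
  · simp only [if_neg hx]
    linear_combination (-((1 - cdf f x) * (x - muG g))) * hab

end Setup

end KS

end KSProofs

/-- there is a unique threshold discount factor d** in (0,1) at which the
optimal dynamic-mechanism profit equals the optimal ex-ante (at-will) profit, with
piD d > piEAO above it and piD d < piEAO below it; moreover d** < piEAO / A. -/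
theorem stmt0
    (f g : ℝ → ℝ)
    (hf_int : IntegrableOn f (Set.Icc 0 1))
    (hg_int : IntegrableOn g (Set.Icc 0 1))
    (hf_ae : ∀ᵐ t, t ∈ Set.Icc (0:ℝ) 1 → 0 < f t)
    (hg_ae : ∀ᵐ t, t ∈ Set.Icc (0:ℝ) 1 → 0 < g t)
    (hf_one : cdf f 1 = 1)
    (hg_one : cdf g 1 = 1)
    (hg_cont : ContinuousOn g (Set.Icc 0 1))
    (hg_pos : ∀ t ∈ Set.Icc (0:ℝ) 1, 0 < g t)
    (hf_pos : ∀ t ∈ Set.Icc (0:ℝ) 1, 0 < f t)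
    (fd : ℝ → ℝ) (hfd_cont : ContinuousOn fd (Set.Icc 0 1))
    (hf_deriv : ∀ t ∈ Set.Icc (0:ℝ) 1, HasDerivWithinAt f (fd t) (Set.Icc 0 1) t)
    (hpsi_mono : StrictMonoOn (psi f) (Set.Icc 0 1))
    (hpsiT_deriv : ∀ x ∈ Set.Ioc (0:ℝ) 1, ∃ d : ℝ → ℝ, ContinuousOn d (Set.Icc 0 x) ∧
      ∀ θ ∈ Set.Icc (0:ℝ) x, 0 < d θ ∧ HasDerivWithinAt (psiT f x) (d θ) (Set.Icc 0 x) θ)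
    (θs : ℝ) (hθs : θs ∈ Set.Ioo (0:ℝ) 1) (hθs0 : psi f θs = 0)
    (θss : ℝ → ℝ)
    (hθss : ∀ x ∈ Set.Ioc (0:ℝ) 1, θss x ∈ Set.Ioo 0 x ∧ psiT f x (θss x) = 0)
    (piD : ℝ → ℝ)
    (hpiD : ∀ δ ∈ Set.Icc (0:ℝ) 1,
      IsGreatest ((fun x => PiD f g θss x δ) '' Set.Icc (0:ℝ) 1) (piD δ))
    (piEAO : ℝ)
    (hEAO : IsGreatest ((fun p => (1 - cdf f p) * calG g p) '' Set.Icc (0:ℝ) 1) piEAO) :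
    ∃! d : ℝ, d ∈ Set.Ioo (0:ℝ) 1 ∧ piD d = piEAO ∧
      (∀ δ ∈ Set.Ioo d 1, piEAO < piD δ) ∧
      (∀ δ ∈ Set.Ioo (0:ℝ) d, piD δ < piEAO) ∧
      d < piEAO / (∫ θ in θs..1, calG g (psi f θ) * f θ) := by
  classical
  have fCont : ContinuousOn f (Set.Icc 0 1) := fun t ht => (hf_deriv t ht).continuousWithinAt
  have hpsiT1 : psiT f 1 = psi f := by funext θ; unfold psiT psi; rw [hf_one]
  obtain ⟨dψ, hdψc, hdψp⟩ := hpsiT_deriv 1 ⟨zero_lt_one, le_refl 1⟩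
  rw [hpsiT1] at hdψp
  have S : KS.Setup f g θs dψ :=
    ⟨hf_int, hg_int, hf_pos, hg_pos, fCont, hg_cont, hf_one, hg_one, hpsi_mono, hθs, hθs0,
      hdψc, fun θ hθ => (hdψp θ hθ).1, fun θ hθ => (hdψp θ hθ).2⟩
  set A := ∫ θ in θs..1, calG g (psi f θ) * f θ with hAdef
  have hθsI : θs ∈ Set.Icc (0:ℝ) 1 := ⟨hθs.1.le, hθs.2.le⟩
  have h0I : (0:ℝ) ∈ Set.Icc (0:ℝ) 1 := ⟨le_refl 0, zero_le_one⟩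
  have h1I : (1:ℝ) ∈ Set.Icc (0:ℝ) 1 := ⟨zero_le_one, le_refl 1⟩
  have hub : ∀ p ∈ Set.Icc (0:ℝ) 1, (1 - cdf f p) * calG g p ≤ piEAO :=
    fun p hp => hEAO.2 ⟨p, hp, rfl⟩
  have hEpos : 0 < piEAO := by
    have h1 : 0 < (1 - cdf f θs) * calG g θs := by
      apply mul_pos
      · have := S.F_lt_one hθsI hθs.2; linarith
      · exact S.Gc_pos hθs.1 hθs.2.le
    exact lt_of_lt_of_le h1 (hub θs hθsI)
  have hAgt : piEAO < A := by
    obtain ⟨p, hp, hpe⟩ := hEAO.1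
    simp only [] at hpe
    rcases eq_or_ne p 0 with h0 | h0
    · exfalso
      rw [h0] at hpe
      rw [KS.Setup.Gc_zero (g := g), mul_zero] at hpe
      linarith
    rcases eq_or_ne p 1 with h1 | h1
    · exfalso
      rw [h1, hf_one] at hpe
      simp at hpe
      linarith
    have hpIoo : p ∈ Set.Ioo (0:ℝ) 1 :=
      ⟨lt_of_le_of_ne hp.1 (Ne.symm h0), lt_of_le_of_ne hp.2 h1⟩
    rw [← hpe]
    exact S.A_gt_E hpIoo
  have hApos : 0 < A := lt_trans hEpos hAgt
  have hφub : ∀ δ ∈ Set.Icc (0:ℝ) 1, ∀ x ∈ Set.Icc (0:ℝ) 1, PiD f g θss x δ ≤ piD δ :=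
    fun δ hδ x hx => (hpiD δ hδ).2 ⟨x, hx, rfl⟩
  have hφ1 : A ≤ piD 1 := by
    have h := hφub 1 h1I 1 h1I
    rw [S.PiD_at_one θss (hθss 1 ⟨zero_lt_one, le_refl 1⟩).1
      (hθss 1 ⟨zero_lt_one, le_refl 1⟩).2 1] at h
    rw [← hAdef] at h
    linarith
  have hφlow : ∀ δ, 0 ≤ δ → δ < 1 → δ * A < piD δ := by
    intro δ h0 h1
    obtain ⟨x, hx, hlt⟩ := S.exists_beats θss hθss hpsiT_deriv h0 h1
    rw [← hAdef] at hlt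
    exact lt_of_lt_of_le hlt (hφub δ ⟨h0, h1.le⟩ x hx)
  have hφ0 : piD 0 < piEAO := by
    obtain ⟨x, hx, hxe⟩ := (hpiD 0 h0I).1
    rw [← hxe]
    exact S.PiD_zero_lt θss hub hEpos hx
  have hconv : ConvexOn ℝ (Set.Icc 0 1) piD := by
    refine ⟨convex_Icc 0 1, ?_⟩
    intro δ1 m1 δ2 m2 a b ha hb hab
    have hmem := (convex_Icc (0:ℝ) 1) m1 m2 ha hb hab
    obtain ⟨x, hx, hxe⟩ := (hpiD _ hmem).1
    simp only [smul_eq_mul] at *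
    rw [← hxe, KS.Setup.PiD_affine (f := f) (g := g) θss x hab]
    have h1 := mul_le_mul_of_nonneg_left (hφub δ1 m1 x hx) ha
    have h2 := mul_le_mul_of_nonneg_left (hφub δ2 m2 x hx) hb
    linarith
  have hcont : ContinuousOn piD (Set.Ioo 0 1) := by
    have := hconv.continuousOn_interior
    rwa [interior_Icc] at this
  set δb := piEAO / A with hδbdef
  have hδb0 : 0 < δb := div_pos hEpos hApos
  have hδb1 : δb < 1 := (div_lt_one hApos).2 hAgt
  have hδbA : δb * A = piEAO := div_mul_cancel₀ piEAO hApos.ne'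
  set T := {δ : ℝ | δ ∈ Set.Icc (0:ℝ) 1 ∧ piD δ ≤ piEAO} with hTdef
  have hT0 : (0:ℝ) ∈ T := ⟨h0I, hφ0.le⟩
  have hTne : T.Nonempty := ⟨0, hT0⟩
  have hTsub : ∀ δ ∈ T, δ < δb := by
    rintro δ ⟨hδI, hδle⟩
    by_contra hcon
    push_neg at hcon
    rcases lt_or_eq_of_le hδI.2 with hδ1 | hδ1
    · have h2 : piEAO ≤ δ * A := by
        rw [← hδbA]
        exact mul_le_mul_of_nonneg_right hcon hApos.le
      have := hφlow δ hδI.1 hδ1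
      linarith
    · rw [hδ1] at hδle
      linarith
  have hbdd : BddAbove T := ⟨1, fun δ hδ => hδ.1.2⟩
  set d := sSup T with hddef
  have hdleδb : d ≤ δb := csSup_le hTne (fun δ hδ => (hTsub δ hδ).le)
  have hd0 : 0 < d := by
    have hden : 0 < piD 1 - piD 0 := by linarith
    set r := (piEAO - piD 0) / (piD 1 - piD 0) with hrdef
    have hrpos : 0 < r := div_pos (by linarith) hden
    set ε := min (1/2 : ℝ) (r/2) with hεdef
    have hεpos : 0 < ε := lt_min (by norm_num) (by linarith)
    have hε12 : ε ≤ 1/2 := min_le_left _ _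
    have hεr : ε ≤ r/2 := min_le_right _ _
    have hεmem : ε ∈ T := by
      refine ⟨⟨hεpos.le, by linarith⟩, ?_⟩
      have hkey := hconv.2 h0I h1I (show (0:ℝ) ≤ 1 - ε by linarith) hεpos.le (by ring)
      simp only [smul_eq_mul, mul_zero, mul_one, zero_add] at hkey
      have h5 := mul_le_mul_of_nonneg_right hεr hden.le
      have h6 : r/2 * (piD 1 - piD 0) = (piEAO - piD 0)/2 := by
        rw [hrdef]; field_simp
      rw [h6] at h5
      nlinarith [hkey, h5]
    exact lt_of_lt_of_le hεpos (le_csSup hbdd hεmem)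
  have hd1 : d < 1 := lt_of_le_of_lt hdleδb hδb1
  have hdI : d ∈ Set.Ioo (0:ℝ) 1 := ⟨hd0, hd1⟩
  have habove : ∀ δ ∈ Set.Ioo d 1, piEAO < piD δ := by
    intro δ hδ
    by_contra hcon
    push_neg at hcon
    have hmem : δ ∈ T := ⟨⟨(hd0.trans hδ.1).le, hδ.2.le⟩, hcon⟩
    have := le_csSup hbdd hmem
    linarith [hδ.1]
  have hbelow : ∀ δ ∈ Set.Ioo (0:ℝ) d, piD δ < piEAO := by
    intro δ hδ
    obtain ⟨δ', hδ'T, hδδ'⟩ := exists_lt_of_lt_csSup hTne hδ.2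
    have hδ'0 : 0 < δ' := lt_trans hδ.1 hδδ'
    set b := δ / δ' with hbdef
    have hb0 : 0 < b := div_pos hδ.1 hδ'0
    have hb1 : b < 1 := (div_lt_one hδ'0).2 hδδ'
    have hkey := hconv.2 h0I hδ'T.1 (show (0:ℝ) ≤ 1 - b by linarith) hb0.le (by ring)
    simp only [smul_eq_mul, mul_zero, zero_add] at hkey
    have hbδ' : b * δ' = δ := by
      rw [hbdef]; field_simp
    rw [hbδ'] at hkey
    have h1 : (1 - b) * piD 0 < (1 - b) * piEAO :=
      mul_lt_mul_of_pos_left hφ0 (by linarith)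
    have h2 : b * piD δ' ≤ b * piEAO := mul_le_mul_of_nonneg_left hδ'T.2 hb0.le
    nlinarith [hkey, h1, h2]
  have hdeq : piD d = piEAO := by
    have hcd : ContinuousAt piD d := hcont.continuousAt (isOpen_Ioo.mem_nhds hdI)
    have hle : piD d ≤ piEAO := by
      have htd : Filter.Tendsto piD (nhdsWithin d (Set.Iio d)) (nhds (piD d)) :=
        hcd.tendsto.mono_left nhdsWithin_le_nhds
      apply le_of_tendsto htd
      have h2 : Set.Ioi (0:ℝ) ∈ nhdsWithin d (Set.Iio d) :=
        nhdsWithin_le_nhds (Ioi_mem_nhds hd0)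
      filter_upwards [h2, self_mem_nhdsWithin] with δ hδ0' hδd
      exact (hbelow δ ⟨hδ0', hδd⟩).le
    have hge : piEAO ≤ piD d := by
      have htd : Filter.Tendsto piD (nhdsWithin d (Set.Ioi d)) (nhds (piD d)) :=
        hcd.tendsto.mono_left nhdsWithin_le_nhds
      apply ge_of_tendsto htd
      have h2 : Set.Iio (1:ℝ) ∈ nhdsWithin d (Set.Ioi d) :=
        nhdsWithin_le_nhds (Iio_mem_nhds hd1)
      filter_upwards [h2, self_mem_nhdsWithin] with δ hδ1' hδd
      exact (habove δ ⟨hδd, hδ1'⟩).le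
    linarith
  have hdltδb : d < δb := by
    apply lt_of_le_of_ne hdleδb
    intro hcon
    have h1 := hφlow δb hδb0.le hδb1
    rw [hδbA] at h1
    rw [hcon] at hdeq
    linarith
  refine ⟨d, ⟨hdI, hdeq, habove, hbelow, hdltδb⟩, ?_⟩
  rintro d' ⟨hd'I, hd'eq, h'above, h'below, _⟩
  by_contra hne
  rcases Ne.lt_or_gt hne with hlt | hlt
  · set m := (d' + d)/2 with hmdef
    have h1 : piEAO < piD m := h'above m ⟨by linarith [hd'I.1], by linarith [hd1]⟩
    have h2 : piD m < piEAO := hbelow m ⟨by linarith [hd'I.1], by linarith⟩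
    linarith
  · set m := (d + d')/2 with hmdef
    have h1 : piEAO < piD m := habove m ⟨by linarith, by linarith [hd'I.2]⟩
    have h2 : piD m < piEAO := h'below m ⟨by linarith [hd0], by linarith⟩
    linarith
end

section
/- For every δ ∈ (0,1), max_{x∈[0,1]} Π^D(x,δ) > Π^D(1,δ) = δ·∫_{θ*}^1 𝒢(ψ(θ)) f(θ) dθ; in particular, the maximum of Π^D(·,δ) over [0,1] is attained only at points x < 1 (the optimal dynamic mechanism strictly outperforms the ex-post optimal mechanism). -/
open MeasureTheory

section Helpers

variable {g : ℝ → ℝ}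

lemma cdf_of_nonpos (g : ℝ → ℝ) {y : ℝ} (hy : y ≤ 0) : cdf g y = 0 := by
  simp [cdf, Set.Ioc_eq_empty (not_lt.mpr hy)]

lemma Ioc_sub_Icc {a b : ℝ} (ha : 0 ≤ a) (hb : b ≤ 1) : Set.Ioc a b ⊆ Set.Icc 0 1 :=
  fun t ht => ⟨ha.trans ht.1.le, ht.2.trans hb⟩

lemma cdf_add_diff (hg : IntegrableOn g (Set.Icc 0 1)) {a b : ℝ}
    (ha : 0 ≤ a) (hab : a ≤ b) (hb : b ≤ 1) :
    cdf g b = cdf g a + ∫ t in Set.Ioc a b, g t := by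
  unfold cdf
  rw [← Set.Ioc_union_Ioc_eq_Ioc ha hab,
    setIntegral_union (Set.Ioc_disjoint_Ioc_of_le le_rfl) measurableSet_Ioc
      (hg.mono_set (Ioc_sub_Icc le_rfl (hab.trans hb))) (hg.mono_set (Ioc_sub_Icc ha hb))]

lemma setInt_nonneg (hg0 : ∀ t ∈ Set.Icc (0:ℝ) 1, 0 ≤ g t) {a b : ℝ}
    (ha : 0 ≤ a) (hb : b ≤ 1) : 0 ≤ ∫ t in Set.Ioc a b, g t :=
  setIntegral_nonneg measurableSet_Ioc fun t ht => hg0 t (Ioc_sub_Icc ha hb ht)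

lemma cdf_nonneg (hg0 : ∀ t ∈ Set.Icc (0:ℝ) 1, 0 ≤ g t) {y : ℝ} (hy : y ≤ 1) :
    0 ≤ cdf g y := by
  rcases le_or_gt y 0 with h | h
  · rw [cdf_of_nonpos g h]
  · exact setInt_nonneg hg0 le_rfl hy

lemma cdf_mono (hg : IntegrableOn g (Set.Icc 0 1))
    (hg0 : ∀ t ∈ Set.Icc (0:ℝ) 1, 0 ≤ g t) {a b : ℝ} (hab : a ≤ b) (hb : b ≤ 1) :
    cdf g a ≤ cdf g b := by
  rcases le_or_gt a 0 with h | h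
  · rw [cdf_of_nonpos g h]; exact cdf_nonneg hg0 hb
  · rw [cdf_add_diff hg h.le hab hb]
    have := setInt_nonneg hg0 h.le hb (a := a) (b := b)
    linarith

lemma setInt_le_const (hg : IntegrableOn g (Set.Icc 0 1)) {M : ℝ}
    (hM : ∀ t ∈ Set.Icc (0:ℝ) 1, g t ≤ M) {a b : ℝ}
    (ha : 0 ≤ a) (hab : a ≤ b) (hb : b ≤ 1) :
    ∫ t in Set.Ioc a b, g t ≤ M * (b - a) := by
  have h1 : ∫ t in Set.Ioc a b, g t ≤ ∫ _ in Set.Ioc a b, M :=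
    setIntegral_mono_on (hg.mono_set (Ioc_sub_Icc ha hb))
      (integrableOn_const measure_Ioc_lt_top.ne) measurableSet_Ioc
      (fun t ht => hM t (Ioc_sub_Icc ha hb ht))
  rwa [setIntegral_const, Real.volume_real_Ioc_of_le hab, smul_eq_mul,
    mul_comm] at h1

lemma setInt_const_le (hg : IntegrableOn g (Set.Icc 0 1)) {m a b : ℝ}
    (hm : ∀ t ∈ Set.Ioc a b, m ≤ g t) (ha : 0 ≤ a) (hab : a ≤ b) (hb : b ≤ 1) :
    m * (b - a) ≤ ∫ t in Set.Ioc a b, g t := by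
  have h1 : ∫ _ in Set.Ioc a b, m ≤ ∫ t in Set.Ioc a b, g t :=
    setIntegral_mono_on (integrableOn_const measure_Ioc_lt_top.ne)
      (hg.mono_set (Ioc_sub_Icc ha hb)) measurableSet_Ioc hm
  rwa [setIntegral_const, Real.volume_real_Ioc_of_le hab, smul_eq_mul,
    mul_comm] at h1

lemma cdf_sub_le (hg : IntegrableOn g (Set.Icc 0 1))
    (hg0 : ∀ t ∈ Set.Icc (0:ℝ) 1, 0 ≤ g t) {M : ℝ}
    (hM : ∀ t ∈ Set.Icc (0:ℝ) 1, g t ≤ M) (hM0 : 0 ≤ M) {a b : ℝ}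
    (hab : a ≤ b) (hb : b ≤ 1) :
    cdf g b - cdf g a ≤ M * (b - a) := by
  rcases le_or_gt b 0 with h | h
  · rw [cdf_of_nonpos g h, cdf_of_nonpos g (hab.trans h)]; nlinarith
  rcases le_or_gt a 0 with h' | h'
  · rw [cdf_of_nonpos g h']
    have := setInt_le_const hg hM le_rfl h.le hb (g := g)
    unfold cdf; nlinarith
  · rw [cdf_add_diff hg h'.le hab hb]
    have := setInt_le_const hg hM h'.le hab hb (g := g)
    linarith

lemma cdf_continuousOn (hg : IntegrableOn g (Set.Icc 0 1))
    (hg0 : ∀ t ∈ Set.Icc (0:ℝ) 1, 0 ≤ g t) {M : ℝ}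
    (hM : ∀ t ∈ Set.Icc (0:ℝ) 1, g t ≤ M) (hM0 : 0 ≤ M) :
    ContinuousOn (cdf g) (Set.Iic 1) := by
  have : LipschitzOnWith (Real.toNNReal M) (cdf g) (Set.Iic 1) := by
    rw [lipschitzOnWith_iff_dist_le_mul]
    intro x hx y hy
    rcases le_total y x with h | h
    · rw [Real.dist_eq, Real.dist_eq, abs_of_nonneg (by
        have := cdf_mono hg hg0 h hx; linarith), abs_of_nonneg (by linarith)]
      have := cdf_sub_le hg hg0 hM hM0 h hx
      calc cdf g x - cdf g y ≤ M * (x - y) := this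
        _ ≤ Real.toNNReal M * (x - y) :=
            mul_le_mul_of_nonneg_right (Real.le_coe_toNNReal M) (by linarith)
    · rw [Real.dist_eq, Real.dist_eq, abs_sub_comm, abs_of_nonneg (by
        have := cdf_mono hg hg0 h hy; linarith), abs_sub_comm, abs_of_nonneg (by linarith)]
      have := cdf_sub_le hg hg0 hM hM0 h hy
      calc cdf g y - cdf g x ≤ M * (y - x) := this
        _ ≤ Real.toNNReal M * (y - x) :=
            mul_le_mul_of_nonneg_right (Real.le_coe_toNNReal M) (by linarith)
  exact this.continuousOn

lemma cdf_integrableOn (hg : IntegrableOn g (Set.Icc 0 1)) :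
    IntegrableOn (cdf g) (Set.Icc 0 1) :=
  (intervalIntegral.continuousOn_primitive hg).integrableOn_Icc

lemma calG_eq_cdf_cdf (g : ℝ → ℝ) : calG g = cdf (cdf g) := rfl

lemma calG_lower (hg : IntegrableOn g (Set.Icc 0 1))
    (hg0 : ∀ t ∈ Set.Icc (0:ℝ) 1, 0 ≤ g t)
    {a b : ℝ} (ha : 0 ≤ a) (hab : a ≤ b) (hb : b ≤ 1) :
    calG g a + cdf g a * (b - a) ≤ calG g b := by
  rw [calG_eq_cdf_cdf, cdf_add_diff (cdf_integrableOn hg) ha hab hb]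
  have := setInt_const_le (g := cdf g) (m := cdf g a) (a := a) (b := b) (cdf_integrableOn hg)
    (fun t ht => cdf_mono hg hg0 ht.1.le (ht.2.trans hb)) ha hab hb
  linarith

end Helpers

lemma muG_add_calG {g : ℝ → ℝ} (hg : IntegrableOn g (Set.Icc 0 1))
    (hg_cont : ContinuousOn g (Set.Icc 0 1)) (hg_one : cdf g 1 = 1) :
    muG g + calG g 1 = 1 := by
  have hccdf : ContinuousOn (cdf g) (Set.Icc 0 1) := intervalIntegral.continuousOn_primitive hg
  have hcont : ContinuousOn (fun u => u * cdf g u) (Set.Icc 0 1) := continuousOn_id.mul hccdf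
  have hderiv : ∀ u ∈ Set.Ioo (0:ℝ) 1, HasDerivWithinAt (fun u => u * cdf g u)
      (cdf g u + u * g u) (Set.Ioi u) u := by
    intro u hu
    have hnhds : Set.Icc (0:ℝ) 1 ∈ nhds u := Icc_mem_nhds hu.1 hu.2
    have hInt : IntervalIntegrable g volume 0 u :=
      (hg.mono_set (by rw [Set.uIcc_of_le hu.1.le]
                       exact Set.Icc_subset_Icc le_rfl hu.2.le)).intervalIntegrable
    have hmeas : StronglyMeasurableAtFilter g (nhds u) volume :=
      ⟨Set.Icc 0 1, hnhds, hg.aestronglyMeasurable⟩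
    have hca : ContinuousAt g u := (hg_cont u ⟨hu.1.le, hu.2.le⟩).continuousAt hnhds
    have hG : HasDerivAt (fun v => ∫ t in (0:ℝ)..v, g t) (g u) u :=
      intervalIntegral.integral_hasDerivAt_right hInt hmeas hca
    have hG' : HasDerivAt (cdf g) (g u) u := by
      apply hG.congr_of_eventuallyEq
      filter_upwards [eventually_gt_nhds hu.1] with v hv
      exact (intervalIntegral.integral_of_le hv.le).symm
    have := (hasDerivAt_id u).mul hG'
    simp only [one_mul, id] at this
    exact this.hasDerivWithinAt
  have hint1 : IntervalIntegrable (cdf g) volume 0 1 := by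
    have := cdf_integrableOn hg
    rw [← Set.uIcc_of_le (zero_le_one (α := ℝ))] at this
    exact this.intervalIntegrable
  have hint2' : IntegrableOn (fun u => u * g u) (Set.Icc 0 1) := by
    apply Integrable.bdd_mul hg aestronglyMeasurable_id (c := 1)
    filter_upwards [ae_restrict_mem measurableSet_Icc] with x hx
    simp only [id_eq, Real.norm_eq_abs, abs_le]
    exact ⟨by linarith [hx.1], hx.2⟩
  have hint2 : IntervalIntegrable (fun u => u * g u) volume 0 1 := by
    rw [← Set.uIcc_of_le (zero_le_one (α := ℝ))] at hint2'
    exact hint2'.intervalIntegrable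
  have key : ∫ u in (0:ℝ)..1, (cdf g u + u * g u) = 1 * cdf g 1 - 0 * cdf g 0 :=
    intervalIntegral.integral_eq_sub_of_hasDeriv_right_of_le zero_le_one hcont hderiv
      (hint1.add hint2)
  rw [intervalIntegral.integral_add hint1 hint2] at key
  rw [intervalIntegral.integral_of_le (zero_le_one), intervalIntegral.integral_of_le (zero_le_one)] at key
  have h1 : calG g 1 = ∫ u in Set.Ioc (0:ℝ) 1, cdf g u := rfl
  have h2 : muG g = ∫ u in Set.Ioc (0:ℝ) 1, u * g u := rfl
  rw [hg_one] at key
  rw [h1, h2]; linarith [key]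

set_option maxHeartbeats 1600000 in
/-- for every discount factor in (0,1) the maximum of the dynamic-mechanism
profit over [0,1] strictly exceeds its value at x = 1, which equals the (discounted)
ex-post optimal profit; any maximizer lies strictly below 1. -/
theorem stmt1
    (f g : ℝ → ℝ)
    (hf_int : IntegrableOn f (Set.Icc 0 1))
    (hg_int : IntegrableOn g (Set.Icc 0 1))
    (hf_ae : ∀ᵐ t, t ∈ Set.Icc (0:ℝ) 1 → 0 < f t)
    (hg_ae : ∀ᵐ t, t ∈ Set.Icc (0:ℝ) 1 → 0 < g t)
    (hf_one : cdf f 1 = 1)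
    (hg_one : cdf g 1 = 1)
    (hg_cont : ContinuousOn g (Set.Icc 0 1))
    (hg_pos : ∀ t ∈ Set.Icc (0:ℝ) 1, 0 < g t)
    (hf_pos : ∀ t ∈ Set.Icc (0:ℝ) 1, 0 < f t)
    (fd : ℝ → ℝ) (hfd_cont : ContinuousOn fd (Set.Icc 0 1))
    (hf_deriv : ∀ t ∈ Set.Icc (0:ℝ) 1, HasDerivWithinAt f (fd t) (Set.Icc 0 1) t)
    (hpsi_mono : StrictMonoOn (psi f) (Set.Icc 0 1))
    (hpsiT_deriv : ∀ x ∈ Set.Ioc (0:ℝ) 1, ∃ d : ℝ → ℝ, ContinuousOn d (Set.Icc 0 x) ∧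
      ∀ θ ∈ Set.Icc (0:ℝ) x, 0 < d θ ∧ HasDerivWithinAt (psiT f x) (d θ) (Set.Icc 0 x) θ)
    (θs : ℝ) (hθs : θs ∈ Set.Ioo (0:ℝ) 1) (hθs0 : psi f θs = 0)
    (θss : ℝ → ℝ)
    (hθss : ∀ x ∈ Set.Ioc (0:ℝ) 1, θss x ∈ Set.Ioo 0 x ∧ psiT f x (θss x) = 0)
    : ∀ δ ∈ Set.Ioo (0:ℝ) 1,
      PiD f g θss 1 δ = δ * (∫ θ in θs..1, calG g (psi f θ) * f θ) ∧
      ∀ m : ℝ, IsGreatest ((fun x => PiD f g θss x δ) '' Set.Icc (0:ℝ) 1) m →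
        PiD f g θss 1 δ < m ∧
        ∀ x ∈ Set.Icc (0:ℝ) 1, PiD f g θss x δ = m → x < 1 := by
  intro δ hδ
  obtain ⟨hδ0, hδ1⟩ := hδ
  -- basic facts
  have hf0 : ∀ t ∈ Set.Icc (0:ℝ) 1, 0 ≤ f t := fun t ht => (hf_pos t ht).le
  have hg0 : ∀ t ∈ Set.Icc (0:ℝ) 1, 0 ≤ g t := fun t ht => (hg_pos t ht).le
  have hf_cont : ContinuousOn f (Set.Icc 0 1) := fun t ht => (hf_deriv t ht).continuousWithinAt
  obtain ⟨tmf, htmf, hmin'⟩ := isCompact_Icc.exists_isMinOn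
    ⟨0, Set.left_mem_Icc.2 zero_le_one⟩ hf_cont
  obtain ⟨tMf, htMf, hmaxf'⟩ := isCompact_Icc.exists_isMaxOn
    ⟨0, Set.left_mem_Icc.2 zero_le_one⟩ hf_cont
  obtain ⟨tMg, htMg, hmaxg'⟩ := isCompact_Icc.exists_isMaxOn
    ⟨0, Set.left_mem_Icc.2 zero_le_one⟩ hg_cont
  obtain ⟨tmg, htmg, hming'⟩ := isCompact_Icc.exists_isMinOn
    ⟨0, Set.left_mem_Icc.2 zero_le_one⟩ hg_cont
  have hmin := isMinOn_iff.mp hmin'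
  have hmaxf := isMaxOn_iff.mp hmaxf'
  have hmaxg := isMaxOn_iff.mp hmaxg'
  have hming := isMinOn_iff.mp hming'
  have hmf_pos : 0 < f tmf := hf_pos _ htmf
  have hMf_pos : 0 < f tMf := hf_pos _ htMf
  have hMg_pos : 0 < g tMg := hg_pos _ htMg
  have hmg_pos : 0 < g tmg := hg_pos _ htmg
  -- cdf g bounds
  have hGle1 : ∀ y : ℝ, y ≤ 1 → cdf g y ≤ 1 := fun y hy => by
    rw [← hg_one]; exact cdf_mono hg_int hg0 hy le_rfl
  have hcdfg0 : ∀ y ∈ Set.Icc (0:ℝ) 1, 0 ≤ cdf g y := fun y hy => cdf_nonneg hg0 hy.2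
  have hGle1' : ∀ y ∈ Set.Icc (0:ℝ) 1, cdf g y ≤ 1 := fun y hy => hGle1 y hy.2
  have hcalG_nonneg : ∀ y : ℝ, y ≤ 1 → 0 ≤ calG g y := fun y hy => by
    rw [calG_eq_cdf_cdf]; exact cdf_nonneg hcdfg0 hy
  have hcalG_mono : ∀ a b : ℝ, a ≤ b → b ≤ 1 → calG g a ≤ calG g b := fun a b hab hb => by
    rw [calG_eq_cdf_cdf]; exact cdf_mono (cdf_integrableOn hg_int) hcdfg0 hab hb
  have hG_cont : ContinuousOn (cdf g) (Set.Iic 1) :=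
    cdf_continuousOn hg_int hg0 (fun t ht => hmaxg t ht) hMg_pos.le
  have hcalG_cont : ContinuousOn (calG g) (Set.Iic 1) := by
    rw [calG_eq_cdf_cdf]
    exact cdf_continuousOn (cdf_integrableOn hg_int) hcdfg0 hGle1' zero_le_one
  -- psi facts
  have hψ1 : psi f 1 = 1 := by unfold psi; rw [hf_one]; simp
  have hpsiT1 : psiT f 1 = psi f := funext fun θ => by unfold psi psiT; rw [hf_one]
  have hψ_cont : ContinuousOn (psi f) (Set.Icc 0 1) := by
    obtain ⟨d1, _, hd1⟩ := hpsiT_deriv 1 ⟨zero_lt_one, le_rfl⟩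
    have : ContinuousOn (psiT f 1) (Set.Icc 0 1) :=
      fun θ hθ => ((hd1 θ hθ).2).continuousWithinAt
    rwa [hpsiT1] at this
  have hψ_le1 : ∀ θ ∈ Set.Icc (0:ℝ) 1, psi f θ ≤ 1 := fun θ hθ => by
    rw [← hψ1]
    exact hpsi_mono.monotoneOn hθ (Set.right_mem_Icc.2 zero_le_one) hθ.2
  have hθs_mem : θs ∈ Set.Icc (0:ℝ) 1 := ⟨hθs.1.le, hθs.2.le⟩
  have hψ_nonpos : ∀ θ ∈ Set.Icc (0:ℝ) 1, θ ≤ θs → psi f θ ≤ 0 := fun θ hθ h => by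
    rw [← hθs0]; exact hpsi_mono.monotoneOn hθ hθs_mem h
  have hψ_nonneg : ∀ θ ∈ Set.Icc (0:ℝ) 1, θs ≤ θ → 0 ≤ psi f θ := fun θ hθ h => by
    rw [← hθs0]; exact hpsi_mono.monotoneOn hθs_mem hθ h
  -- θss 1 = θs
  obtain ⟨hθss1_mem, hθss1_psi⟩ := hθss 1 ⟨zero_lt_one, le_rfl⟩
  have hθss1 : θss 1 = θs := by
    apply hpsi_mono.injOn ⟨hθss1_mem.1.le, hθss1_mem.2.le⟩ hθs_mem
    rw [hθs0, ← hpsiT1, hθss1_psi]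
  -- Part 1
  have hPiD1 : PiD f g θss 1 δ = δ * ∫ θ in θs..1, calG g (psi f θ) * f θ := by
    unfold PiD
    rw [if_neg one_ne_zero, hθss1, hpsiT1, hf_one]
    ring
  refine ⟨hPiD1, ?_⟩
  intro m hm
  -- choose x₀
  have hμG : muG g + calG g 1 = 1 := muG_add_calG hg_int hg_cont hg_one
  have hG1pos : 0 < calG g 1 := by
    have hGhalf : 0 < cdf g (1/2) := by
      have h12 : cdf g (1/2) = cdf g 0 + ∫ t in Set.Ioc (0:ℝ) (1/2), g t :=
        cdf_add_diff hg_int le_rfl (by norm_num) (by norm_num)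
      have hge := setInt_const_le (g := g) (a := 0) (b := (1/2:ℝ)) hg_int
        (fun t ht => hming t (Ioc_sub_Icc le_rfl (by norm_num) ht)) le_rfl (by norm_num)
        (by norm_num)
      rw [h12, cdf_of_nonpos g le_rfl]
      nlinarith
    have hsplit : calG g 1 = calG g (1/2) + ∫ y in Set.Ioc (1/2:ℝ) 1, cdf g y := by
      rw [calG_eq_cdf_cdf]
      exact cdf_add_diff (cdf_integrableOn hg_int) (by norm_num) (by norm_num) le_rfl
    have htail := setInt_const_le (g := cdf g) (m := cdf g (1/2)) (a := (1/2:ℝ)) (b := 1)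
      (cdf_integrableOn hg_int)
      (fun t ht => cdf_mono hg_int hg0 ht.1.le ht.2) (by norm_num) (by norm_num) le_rfl
    have hcalGhalf : 0 ≤ calG g (1/2) := hcalG_nonneg _ (by norm_num)
    rw [hsplit]; nlinarith
  -- the candidate point x₀
  have hw0 : 0 ≤ g tMg * f tMf / f tmf := by positivity
  have hc_pos : (0:ℝ) < 1 + g tMg * f tMf / f tmf := by linarith
  obtain ⟨c, hc_def⟩ : ∃ c : ℝ, c = 1 + g tMg * f tMf / f tmf := ⟨_, rfl⟩
  have hc_pos' : 0 < c := by rw [hc_def]; linarith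
  obtain ⟨x₀, hx₀_def⟩ : ∃ x₀ : ℝ, x₀ = max θs (1 - (1-δ) * calG g 1 / (2*c)) := ⟨_, rfl⟩
  have hq_pos : 0 < (1-δ) * calG g 1 / (2*c) := by
    apply div_pos (mul_pos (by linarith) hG1pos) (by linarith)
  have hx₀θs : θs ≤ x₀ := by rw [hx₀_def]; exact le_max_left _ _
  have hx₀1 : x₀ < 1 := by rw [hx₀_def]; exact max_lt hθs.2 (by linarith)
  have hx₀0 : 0 < x₀ := lt_of_lt_of_le hθs.1 hx₀θs
  have hx₀A : (1 - x₀) * (2*c) ≤ (1-δ) * calG g 1 := by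
    have h : 1 - (1-δ) * calG g 1 / (2*c) ≤ x₀ := by rw [hx₀_def]; exact le_max_right _ _
    have h2 : 1 - x₀ ≤ (1-δ) * calG g 1 / (2*c) := by linarith
    calc (1-x₀)*(2*c) ≤ ((1-δ) * calG g 1 / (2*c))*(2*c) := by nlinarith
      _ = (1-δ) * calG g 1 := div_mul_cancel₀ _ (by linarith)
  have hx₀mem : x₀ ∈ Set.Ioc (0:ℝ) 1 := ⟨hx₀0, hx₀1.le⟩
  obtain ⟨⟨ht₀0, ht₀x⟩, ht₀ψ⟩ := hθss x₀ hx₀mem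
  obtain ⟨d, hd_cont, hd⟩ := hpsiT_deriv x₀ hx₀mem
  have hψT_cont : ContinuousOn (psiT f x₀) (Set.Icc 0 x₀) :=
    fun θ hθ => ((hd θ hθ).2).continuousWithinAt
  have hsub01 : Set.Icc (0:ℝ) x₀ ⊆ Set.Icc 0 1 := Set.Icc_subset_Icc le_rfl hx₀1.le
  -- cdf f facts
  have hFx₀le1 : cdf f x₀ ≤ 1 := by
    rw [← hf_one]; exact cdf_mono hf_int hf0 hx₀1.le le_rfl
  have hFx₀lt1 : cdf f x₀ < 1 := by
    have h := cdf_add_diff hf_int (a := x₀) (b := 1) hx₀0.le hx₀1.le le_rfl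
    have h2 := setInt_const_le (g := f) (a := x₀) (b := 1) hf_int
      (fun t ht => hmin t (Ioc_sub_Icc hx₀0.le le_rfl ht)) hx₀0.le hx₀1.le le_rfl
    rw [hf_one] at h; nlinarith
  have hFbound : 1 - cdf f x₀ ≤ f tMf * (1 - x₀) := by
    have := cdf_sub_le hf_int hf0 (fun t ht => hmaxf t ht) hMf_pos.le hx₀1.le le_rfl
    rw [hf_one] at this; linarith
  -- pointwise psi/psiT facts on [0, x₀]
  have hfθpos : ∀ θ ∈ Set.Icc (0:ℝ) x₀, 0 < f θ := fun θ hθ => hf_pos θ (hsub01 hθ)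
  have hdiff : ∀ θ ∈ Set.Icc (0:ℝ) x₀, psiT f x₀ θ - psi f θ = (1 - cdf f x₀) / f θ := by
    intro θ hθ
    have h := (hfθpos θ hθ).ne'
    unfold psi psiT
    field_simp
    ring
  have hψ_le_ψT : ∀ θ ∈ Set.Icc (0:ℝ) x₀, psi f θ ≤ psiT f x₀ θ := by
    intro θ hθ
    have h1 := hdiff θ hθ
    have h2 : 0 ≤ (1 - cdf f x₀) / f θ := div_nonneg (by linarith) (hfθpos θ hθ).le
    linarith
  have hψT_leθ : ∀ θ ∈ Set.Icc (0:ℝ) x₀, psiT f x₀ θ ≤ θ := by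
    intro θ hθ
    have hFθ : cdf f θ ≤ cdf f x₀ := cdf_mono hf_int hf0 hθ.2 hx₀1.le
    have h2 : 0 ≤ (cdf f x₀ - cdf f θ) / f θ := div_nonneg (by linarith) (hfθpos θ hθ).le
    unfold psiT; linarith
  have hψT_le1 : ∀ θ ∈ Set.Icc (0:ℝ) x₀, psiT f x₀ θ ≤ 1 :=
    fun θ hθ => (hψT_leθ θ hθ).trans (hθ.2.trans hx₀1.le)
  have ht₀mem01 : θss x₀ ∈ Set.Icc (0:ℝ) 1 := ⟨ht₀0.le, (ht₀x.trans_le hx₀1.le).le⟩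
  have ht₀memx : θss x₀ ∈ Set.Icc (0:ℝ) x₀ := ⟨ht₀0.le, ht₀x.le⟩
  have ht₀θs : θss x₀ ≤ θs := by
    by_contra hcon
    push_neg at hcon
    have h1 : psi f θs < psi f (θss x₀) := hpsi_mono hθs_mem ht₀mem01 hcon
    have h2 : psi f (θss x₀) ≤ psiT f x₀ (θss x₀) := hψ_le_ψT _ ht₀memx
    rw [hθs0] at h1; rw [ht₀ψ] at h2; linarith
  -- continuity of the integrands
  have hmapx : Set.MapsTo (psiT f x₀) (Set.Icc 0 x₀) (Set.Iic 1) := fun θ hθ => hψT_le1 θ hθ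
  have hmap1 : Set.MapsTo (psi f) (Set.Icc 0 1) (Set.Iic 1) := fun θ hθ => hψ_le1 θ hθ
  have hJcont : ContinuousOn (fun θ => cdf g (psiT f x₀ θ)) (Set.Icc 0 x₀) :=
    hG_cont.comp hψT_cont hmapx
  have hKcont : ContinuousOn (fun θ => calG g (psiT f x₀ θ) * f θ) (Set.Icc 0 x₀) :=
    (hcalG_cont.comp hψT_cont hmapx).mul (hf_cont.mono hsub01)
  have hJ1cont : ContinuousOn (fun θ => cdf g (psi f θ)) (Set.Icc 0 1) :=
    hG_cont.comp hψ_cont hmap1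
  have hK1cont : ContinuousOn (fun θ => calG g (psi f θ) * f θ) (Set.Icc 0 1) :=
    (hcalG_cont.comp hψ_cont hmap1).mul hf_cont
  have hII : ∀ {u : ℝ → ℝ} {X a b : ℝ}, ContinuousOn u (Set.Icc 0 X) → 0 ≤ a → a ≤ b → b ≤ X →
      IntervalIntegrable u volume a b := by
    intro u X a b hu ha hab hb
    apply ContinuousOn.intervalIntegrable
    rw [Set.uIcc_of_le hab]
    exact hu.mono (Set.Icc_subset_Icc ha hb)
  obtain ⟨E, hE_def⟩ : ∃ E : ℝ, E = g tMg * (1 - cdf f x₀) / f tmf := ⟨_, rfl⟩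
  have hE0 : 0 ≤ E := by
    rw [hE_def]
    exact div_nonneg (mul_nonneg hMg_pos.le (by linarith)) hmf_pos.le
  obtain ⟨D, hD_def⟩ : ∃ D : ℝ, D = ∫ θ in θs..x₀, cdf g (psi f θ) := ⟨_, rfl⟩
  have hD0 : 0 ≤ D := by
    rw [hD_def]
    exact intervalIntegral.integral_nonneg hx₀θs (fun u hu =>
      cdf_nonneg hg0 (hψ_le1 u ⟨hθs.1.le.trans hu.1, hu.2.trans hx₀1.le⟩))
  -- Step A : upper bound for the J-integral
  have hA1 : ∀ θ ∈ Set.Icc (θss x₀) x₀, cdf g (psiT f x₀ θ) ≤ cdf g (psi f θ) + E := by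
    intro θ hθ'
    have hθ : θ ∈ Set.Icc (0:ℝ) x₀ := ⟨ht₀0.le.trans hθ'.1, hθ'.2⟩
    have lip := cdf_sub_le hg_int hg0 (fun t ht => hmaxg t ht) hMg_pos.le
      (hψ_le_ψT θ hθ) (hψT_le1 θ hθ)
    rw [hdiff θ hθ] at lip
    have h2 : g tMg * ((1 - cdf f x₀) / f θ) ≤ E := by
      rw [hE_def, mul_div_assoc]
      have h3 := div_le_div_of_nonneg_left (by linarith : (0:ℝ) ≤ 1 - cdf f x₀)
        hmf_pos (hmin θ (hsub01 hθ))
      exact mul_le_mul_of_nonneg_left h3 hMg_pos.le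
    linarith
  have hJ_le : (∫ θ in (θss x₀)..x₀, cdf g (psiT f x₀ θ)) ≤ D + E := by
    have hstep1 : (∫ θ in (θss x₀)..x₀, cdf g (psiT f x₀ θ))
        ≤ ∫ θ in (θss x₀)..x₀, (cdf g (psi f θ) + E) :=
      intervalIntegral.integral_mono_on ht₀x.le
        (hII hJcont ht₀0.le ht₀x.le le_rfl)
        ((hII (X := 1) hJ1cont ht₀0.le ht₀x.le hx₀1.le).add intervalIntegrable_const)
        hA1
    have hadd : (∫ θ in (θss x₀)..x₀, (cdf g (psi f θ) + E))
        = (∫ θ in (θss x₀)..x₀, cdf g (psi f θ)) + (x₀ - θss x₀) * E := by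
      rw [intervalIntegral.integral_add (hII (X := 1) hJ1cont ht₀0.le ht₀x.le hx₀1.le)
        intervalIntegrable_const, intervalIntegral.integral_const, smul_eq_mul]
    have hsplit : (∫ θ in (θss x₀)..x₀, cdf g (psi f θ))
        = (∫ θ in (θss x₀)..θs, cdf g (psi f θ)) + D := by
      rw [hD_def]
      exact (intervalIntegral.integral_add_adjacent_intervals
        (hII (X := 1) hJ1cont ht₀0.le ht₀θs hθs.2.le)
        (hII (X := 1) hJ1cont hθs.1.le hx₀θs hx₀1.le)).symm
    have hzero : (∫ θ in (θss x₀)..θs, cdf g (psi f θ)) = 0 := by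
      have heq : Set.EqOn (fun θ => cdf g (psi f θ)) (fun _ => (0:ℝ))
          (Set.uIcc (θss x₀) θs) := by
        intro θ hθ'
        rw [Set.uIcc_of_le ht₀θs] at hθ'
        exact cdf_of_nonpos g
          (hψ_nonpos θ ⟨ht₀0.le.trans hθ'.1, hθ'.2.trans hθs.2.le⟩ hθ'.2)
      rw [intervalIntegral.integral_congr heq, intervalIntegral.integral_zero]
    have hEc : (x₀ - θss x₀) * E ≤ E := by
      have h5 : x₀ - θss x₀ ≤ 1 := by linarith
      calc (x₀ - θss x₀) * E ≤ 1 * E := mul_le_mul_of_nonneg_right h5 hE0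
        _ = E := one_mul E
    linarith
  -- Step B : lower bound for the K-integral
  have hcalG_low : ∀ θ ∈ Set.Icc θs x₀,
      calG g (psi f θ) * f θ + cdf g (psi f θ) * (1 - cdf f x₀)
        ≤ calG g (psiT f x₀ θ) * f θ := by
    intro θ hθ'
    have hθx : θ ∈ Set.Icc (0:ℝ) x₀ := ⟨hθs.1.le.trans hθ'.1, hθ'.2⟩
    have hθ1 : θ ∈ Set.Icc (0:ℝ) 1 := hsub01 hθx
    have ha0 : 0 ≤ psi f θ := hψ_nonneg θ hθ1 hθ'.1
    have hlow := calG_lower hg_int hg0 ha0 (hψ_le_ψT θ hθx) (hψT_le1 θ hθx)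
    rw [hdiff θ hθx] at hlow
    have hfθ := hfθpos θ hθx
    have hmul := mul_le_mul_of_nonneg_right hlow hfθ.le
    have hexp : (calG g (psi f θ) + cdf g (psi f θ) * ((1 - cdf f x₀) / f θ)) * f θ
        = calG g (psi f θ) * f θ + cdf g (psi f θ) * (1 - cdf f x₀) := by
      field_simp
    linarith [hmul, hexp.symm.trans_le hmul]
  have hK_ge : (∫ θ in θs..x₀, calG g (psi f θ) * f θ) + D * (1 - cdf f x₀)
      ≤ ∫ θ in (θss x₀)..x₀, calG g (psiT f x₀ θ) * f θ := by
    have h1 : (∫ θ in θs..x₀, (calG g (psi f θ) * f θ + cdf g (psi f θ) * (1 - cdf f x₀)))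
        ≤ ∫ θ in θs..x₀, calG g (psiT f x₀ θ) * f θ :=
      intervalIntegral.integral_mono_on hx₀θs
        ((hII (X := 1) hK1cont hθs.1.le hx₀θs hx₀1.le).add
          ((hII (X := 1) hJ1cont hθs.1.le hx₀θs hx₀1.le).mul_const _))
        (hII hKcont hθs.1.le hx₀θs le_rfl) hcalG_low
    have h2 : (∫ θ in θs..x₀, (calG g (psi f θ) * f θ + cdf g (psi f θ) * (1 - cdf f x₀)))
        = (∫ θ in θs..x₀, calG g (psi f θ) * f θ) + D * (1 - cdf f x₀) := by
      rw [intervalIntegral.integral_add (hII (X := 1) hK1cont hθs.1.le hx₀θs hx₀1.le)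
        ((hII (X := 1) hJ1cont hθs.1.le hx₀θs hx₀1.le).mul_const _),
        intervalIntegral.integral_mul_const, hD_def]
    have h3 : 0 ≤ ∫ θ in (θss x₀)..θs, calG g (psiT f x₀ θ) * f θ :=
      intervalIntegral.integral_nonneg ht₀θs (fun u hu => by
        have hux : u ∈ Set.Icc (0:ℝ) x₀ := ⟨ht₀0.le.trans hu.1, hu.2.trans hx₀θs⟩
        exact mul_nonneg (hcalG_nonneg _ (hψT_le1 u hux)) (hf0 u (hsub01 hux)))
    have h4 : (∫ θ in (θss x₀)..θs, calG g (psiT f x₀ θ) * f θ)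
        + (∫ θ in θs..x₀, calG g (psiT f x₀ θ) * f θ)
        = ∫ θ in (θss x₀)..x₀, calG g (psiT f x₀ θ) * f θ :=
      intervalIntegral.integral_add_adjacent_intervals
        (hII hKcont ht₀0.le ht₀θs hx₀θs)
        (hII hKcont hθs.1.le hx₀θs le_rfl)
    linarith
  -- Step C : tail bound
  have hC1 : (∫ θ in θs..1, calG g (psi f θ) * f θ)
      = (∫ θ in θs..x₀, calG g (psi f θ) * f θ) + ∫ θ in x₀..1, calG g (psi f θ) * f θ :=
    (intervalIntegral.integral_add_adjacent_intervals
      (hII (X := 1) hK1cont hθs.1.le hx₀θs hx₀1.le)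
      (hII (X := 1) hK1cont hx₀0.le hx₀1.le le_rfl)).symm
  have hC2 : (∫ θ in x₀..1, calG g (psi f θ) * f θ) ≤ calG g 1 * (1 - cdf f x₀) := by
    have h1 : (∫ θ in x₀..1, calG g (psi f θ) * f θ) ≤ ∫ θ in x₀..1, calG g 1 * f θ :=
      intervalIntegral.integral_mono_on hx₀1.le
        (hII (X := 1) hK1cont hx₀0.le hx₀1.le le_rfl)
        ((hII (X := 1) hf_cont hx₀0.le hx₀1.le le_rfl).const_mul _)
        (fun θ hθ => mul_le_mul_of_nonneg_right
          (hcalG_mono _ _ (hψ_le1 θ ⟨hx₀0.le.trans hθ.1, hθ.2⟩) le_rfl)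
          (hf0 θ ⟨hx₀0.le.trans hθ.1, hθ.2⟩))
    have h2 : (∫ θ in x₀..1, calG g 1 * f θ) = calG g 1 * (1 - cdf f x₀) := by
      rw [intervalIntegral.integral_const_mul]
      congr 1
      rw [intervalIntegral.integral_of_le hx₀1.le]
      have h3 := cdf_add_diff hf_int hx₀0.le hx₀1.le le_rfl
      rw [hf_one] at h3; linarith
    linarith
  -- the bracket is positive
  have hbr : 0 < x₀ - muG g - δ * E - δ * calG g 1 := by
    have hEb : E ≤ (g tMg * f tMf / f tmf) * (1 - x₀) := by
      have hnum : g tMg * (1 - cdf f x₀) ≤ g tMg * f tMf * (1 - x₀) := by nlinarith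
      calc E = g tMg * (1 - cdf f x₀) / f tmf := hE_def
        _ ≤ g tMg * f tMf * (1 - x₀) / f tmf := (div_le_div_iff_of_pos_right hmf_pos).mpr hnum
        _ = (g tMg * f tMf / f tmf) * (1 - x₀) := by ring
    have hδE : δ * E ≤ E := by
      calc δ * E ≤ 1 * E := mul_le_mul_of_nonneg_right hδ1.le hE0
        _ = E := one_mul E
    have hcx : (1 - x₀) * (2*c)
        = 2*(1-x₀) + 2*((g tMg * f tMf / f tmf) * (1 - x₀)) := by rw [hc_def]; ring
    linarith only [hδE, hEb, hμG, hx₀A, hcx,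
      mul_pos (show (0:ℝ) < 1-δ by linarith) hG1pos,
      mul_nonneg hw0 (show (0:ℝ) ≤ 1-x₀ by linarith)]
  have hFpos : 0 < 1 - cdf f x₀ := by linarith
  have hPiDx : PiD f g θss x₀ δ = (1 - cdf f x₀) *
      (x₀ - δ * (∫ θ in (θss x₀)..x₀, cdf g (psiT f x₀ θ)) - muG g)
      + δ * ∫ θ in (θss x₀)..x₀, calG g (psiT f x₀ θ) * f θ := by
    unfold PiD; rw [if_neg hx₀0.ne']
  have key : PiD f g θss 1 δ < PiD f g θss x₀ δ := by
    rw [hPiD1, hPiDx, hC1]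
    have h1 : (1 - cdf f x₀) * (x₀ - muG g - δ*D - δ*E)
        ≤ (1 - cdf f x₀) * (x₀ - δ * (∫ θ in (θss x₀)..x₀, cdf g (psiT f x₀ θ)) - muG g) := by
      apply mul_le_mul_of_nonneg_left _ hFpos.le
      nlinarith [mul_nonneg hδ0.le (by linarith [hJ_le] :
        (0:ℝ) ≤ D + E - ∫ θ in (θss x₀)..x₀, cdf g (psiT f x₀ θ))]
    have h2 : δ * ((∫ θ in θs..x₀, calG g (psi f θ) * f θ) + D * (1 - cdf f x₀))
        ≤ δ * ∫ θ in (θss x₀)..x₀, calG g (psiT f x₀ θ) * f θ :=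
      mul_le_mul_of_nonneg_left hK_ge hδ0.le
    have h3 : δ * (∫ θ in x₀..1, calG g (psi f θ) * f θ)
        ≤ δ * (calG g 1 * (1 - cdf f x₀)) :=
      mul_le_mul_of_nonneg_left hC2 hδ0.le
    nlinarith [mul_pos hFpos hbr]
  have hx₀m : PiD f g θss x₀ δ ≤ m := hm.2 ⟨x₀, ⟨hx₀0.le, hx₀1.le⟩, rfl⟩
  refine ⟨lt_of_lt_of_le key hx₀m, ?_⟩
  intro x hx hxm
  rcases lt_or_eq_of_le hx.2 with h | h
  · exact h
  · exfalso
    subst h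
    have hlt : PiD f g θss 1 δ < m := lt_of_lt_of_le key hx₀m
    rw [hxm] at hlt
    exact lt_irrefl m hlt
end

section
/- Let A := ∫_{θ*}^1 𝒢(ψ(θ)) f(θ) dθ, π^EAO := max_{p∈[0,1]} (1−F(p))·𝒢(p), and π^EAFP := max_{p∈[0,1]} (1−F(p))·(p−μ). Then 0 < π^EAFP < π^EAO < A, and setting δ̄ := π^EAO/A ∈ (0,1) and δ* := π^EAFP/A, one has δ* < δ̄, δ·A > π^EAO for every δ ∈ (δ̄,1), and δ·A < π^EAO for every δ ∈ (0,δ̄). -/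
open MeasureTheory

namespace S2
open Set MeasureTheory intervalIntegral

noncomputable def ind (g : ℝ → ℝ) : ℝ → ℝ := (Set.Ioc (0:ℝ) 1).indicator g
noncomputable def P (g : ℝ → ℝ) (x : ℝ) : ℝ := ∫ t in (0:ℝ)..x, ind g t
noncomputable def Q (g : ℝ → ℝ) (x : ℝ) : ℝ := ∫ t in (0:ℝ)..x, P g t

variable {f g : ℝ → ℝ}

lemma ind_integrable (hg : IntegrableOn g (Icc 0 1)) : Integrable (ind g) := by
  rw [ind, integrable_indicator_iff measurableSet_Ioc]
  exact hg.mono_set Ioc_subset_Icc_self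

lemma ind_intInt (hg : IntegrableOn g (Icc 0 1)) (a b : ℝ) :
    IntervalIntegrable (ind g) volume a b := (ind_integrable hg).intervalIntegrable

lemma ind_ae_nonneg (hg_ae : ∀ᵐ t, t ∈ Set.Icc (0:ℝ) 1 → 0 < g t) :
    ∀ᵐ t, 0 ≤ ind g t := by
  filter_upwards [hg_ae] with t ht
  by_cases h : t ∈ Set.Ioc (0:ℝ) 1
  · rw [ind, Set.indicator_of_mem h]
    exact (ht (Ioc_subset_Icc_self h)).le
  · rw [ind, Set.indicator_of_notMem h]

lemma P_eq_cdf {x : ℝ} (hx : x ≤ 1) : P g x = ∫ t in Set.Ioc (0:ℝ) x, g t := by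
  rcases le_or_gt x 0 with h | h
  · have h1 : Set.Ioc (0:ℝ) x = ∅ := Ioc_eq_empty (by simpa using h)
    rw [P, intervalIntegral.integral_of_ge h, h1, MeasureTheory.setIntegral_empty, neg_eq_zero]
    refine setIntegral_eq_zero_of_forall_eq_zero fun t ht => ?_
    exact Set.indicator_of_notMem (fun h' => absurd h'.1 (by linarith [ht.2])) g
  · rw [P, intervalIntegral.integral_of_le h.le]
    refine setIntegral_congr_fun measurableSet_Ioc fun t ht => ?_
    exact Set.indicator_of_mem (show t ∈ Set.Ioc (0:ℝ) 1 from ⟨ht.1, le_trans ht.2 hx⟩) g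

lemma P_continuous (hg : IntegrableOn g (Icc 0 1)) : Continuous (P g) :=
  (ind_integrable hg).continuous_primitive 0

lemma P_sub (hg : IntegrableOn g (Icc 0 1)) (a b : ℝ) :
    P g b - P g a = ∫ t in a..b, ind g t := by
  rw [P, P, intervalIntegral.integral_interval_sub_left (ind_intInt hg 0 b) (ind_intInt hg 0 a)]

lemma P_mono (hg : IntegrableOn g (Icc 0 1))
    (hg_ae : ∀ᵐ t, t ∈ Set.Icc (0:ℝ) 1 → 0 < g t) : Monotone (P g) := by
  intro a b hab
  have := P_sub hg a b
  have h2 : 0 ≤ ∫ t in a..b, ind g t :=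
    intervalIntegral.integral_nonneg_of_ae hab (ind_ae_nonneg hg_ae)
  linarith

lemma P_nonpos {x : ℝ} (hx : x ≤ 0) : P g x = 0 := by
  have := P_eq_cdf (g := g) (le_trans hx zero_le_one)
  rwa [Ioc_eq_empty (by simpa using hx), MeasureTheory.setIntegral_empty] at this

lemma P_nonneg (hg : IntegrableOn g (Icc 0 1))
    (hg_ae : ∀ᵐ t, t ∈ Set.Icc (0:ℝ) 1 → 0 < g t) (x : ℝ) : 0 ≤ P g x := by
  rcases le_or_gt x 0 with h | h
  · rw [P_nonpos h]
  · rw [← P_nonpos (le_refl (0:ℝ))]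
    exact P_mono hg hg_ae h.le

lemma P_lt (hg : IntegrableOn g (Icc 0 1))
    (hg_ae : ∀ᵐ t, t ∈ Set.Icc (0:ℝ) 1 → 0 < g t)
    {a b : ℝ} (ha : 0 ≤ a) (hab : a < b) (hb : b ≤ 1) : P g a < P g b := by
  have h := P_sub hg a b
  have hpos : 0 < ∫ t in a..b, ind g t := by
    rw [intervalIntegral.integral_pos_iff_support_of_nonneg_ae (ind_ae_nonneg hg_ae)
      (ind_intInt hg a b)]
    refine ⟨hab, ?_⟩
    have hsub : ∀ᵐ t, t ∈ Set.Ioc a b → t ∈ Function.support (ind g) ∩ Set.Ioc a b := by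
      filter_upwards [hg_ae] with t ht hmem
      have ht1 : t ∈ Set.Ioc (0:ℝ) 1 := ⟨lt_of_le_of_lt ha hmem.1, le_trans hmem.2 hb⟩
      refine ⟨?_, hmem⟩
      rw [Function.mem_support, ind, Set.indicator_of_mem ht1]
      exact (ht (Ioc_subset_Icc_self ht1)).ne'
    calc (0:ENNReal) < volume (Set.Ioc a b) := by simp [hab]
      _ ≤ _ := measure_mono_ae hsub
  linarith


lemma P_intInt (hg : IntegrableOn g (Icc 0 1)) (a b : ℝ) :
    IntervalIntegrable (P g) volume a b := (P_continuous hg).intervalIntegrable a b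

lemma Q_hasDerivAt (hg : IntegrableOn g (Icc 0 1)) (x : ℝ) :
    HasDerivAt (Q g) (P g x) x :=
  intervalIntegral.integral_hasDerivAt_right (P_intInt hg 0 x)
    ((P_continuous hg).stronglyMeasurable.stronglyMeasurableAtFilter)
    (P_continuous hg).continuousAt

lemma Q_continuous (hg : IntegrableOn g (Icc 0 1)) : Continuous (Q g) := by

  exact intervalIntegral.continuous_primitive (P_intInt hg) 0

lemma Q_eq_calG (hg : IntegrableOn g (Icc 0 1)) {x : ℝ} (hx : x ≤ 1) :
    Q g x = ∫ y in Set.Ioc (0:ℝ) x, (∫ t in Set.Ioc (0:ℝ) y, g t) := by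
  rcases le_or_gt x 0 with h | h
  · have h1 : Set.Ioc (0:ℝ) x = ∅ := Ioc_eq_empty (by simpa using h)
    rw [Q, intervalIntegral.integral_of_ge h, h1, MeasureTheory.setIntegral_empty, neg_eq_zero]
    refine setIntegral_eq_zero_of_forall_eq_zero fun t ht => ?_
    exact P_nonpos ht.2
  · rw [Q, intervalIntegral.integral_of_le h.le]
    refine setIntegral_congr_fun measurableSet_Ioc fun t ht => ?_
    exact P_eq_cdf (le_trans ht.2 hx)

lemma Q_sub (hg : IntegrableOn g (Icc 0 1)) (a b : ℝ) :
    Q g b - Q g a = ∫ t in a..b, P g t := by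
  rw [Q, Q, intervalIntegral.integral_interval_sub_left (P_intInt hg 0 b) (P_intInt hg 0 a)]

lemma Q_nonpos (hg : IntegrableOn g (Icc 0 1)) {x : ℝ} (hx : x ≤ 0) : Q g x = 0 := by
  rw [Q, intervalIntegral.integral_of_ge hx, neg_eq_zero]
  refine setIntegral_eq_zero_of_forall_eq_zero fun t ht => ?_
  exact P_nonpos ht.2

lemma Q_mono (hg : IntegrableOn g (Icc 0 1))
    (hg_ae : ∀ᵐ t, t ∈ Set.Icc (0:ℝ) 1 → 0 < g t) : Monotone (Q g) := by
  intro a b hab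
  have h := Q_sub hg a b
  have h2 : 0 ≤ ∫ t in a..b, P g t :=
    intervalIntegral.integral_nonneg hab (fun t _ => P_nonneg hg hg_ae t)
  linarith

lemma Q_nonneg (hg : IntegrableOn g (Icc 0 1))
    (hg_ae : ∀ᵐ t, t ∈ Set.Icc (0:ℝ) 1 → 0 < g t) (x : ℝ) : 0 ≤ Q g x := by
  rcases le_or_gt x 0 with h | h
  · rw [Q_nonpos hg h]
  · rw [← Q_nonpos hg (le_refl (0:ℝ))]
    exact Q_mono hg hg_ae h.le

lemma Q_pos (hg : IntegrableOn g (Icc 0 1))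
    (hg_ae : ∀ᵐ t, t ∈ Set.Icc (0:ℝ) 1 → 0 < g t)
    {x : ℝ} (h0 : 0 < x) (h1 : x ≤ 1) : 0 < Q g x := by
  rw [Q]
  refine intervalIntegral.intervalIntegral_pos_of_pos_on (P_intInt hg 0 x) (fun t ht => ?_) h0
  have := P_lt hg hg_ae (le_refl (0:ℝ)) ht.1 (le_trans ht.2.le h1)
  rwa [P_nonpos (le_refl (0:ℝ))] at this

/-- Convexity-type inequality: `Q b - Q a ≤ P b * (b - a)` for `a ≤ b ≤ 1`. -/
lemma Q_key (hg : IntegrableOn g (Icc 0 1))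
    (hg_ae : ∀ᵐ t, t ∈ Set.Icc (0:ℝ) 1 → 0 < g t)
    {a b : ℝ} (hab : a ≤ b) (hb : b ≤ 1) : Q g b - Q g a ≤ P g b * (b - a) := by
  rw [Q_sub hg a b]
  calc ∫ t in a..b, P g t ≤ ∫ _t in a..b, P g b := by
        refine intervalIntegral.integral_mono_on hab (P_intInt hg a b)
          (intervalIntegrable_const) (fun t ht => P_mono hg hg_ae ht.2)
    _ = P g b * (b - a) := by rw [intervalIntegral.integral_const, smul_eq_mul]; ring

/-- Strict version for `0 ≤ a < b ≤ 1`. -/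
lemma Q_key_lt (hg : IntegrableOn g (Icc 0 1))
    (hg_ae : ∀ᵐ t, t ∈ Set.Icc (0:ℝ) 1 → 0 < g t)
    {a b : ℝ} (ha : 0 ≤ a) (hab : a < b) (hb : b ≤ 1) :
    Q g b - Q g a < P g b * (b - a) := by
  rw [Q_sub hg a b]
  have hpos : 0 < ∫ t in a..b, (P g b - P g t) := by
    refine intervalIntegral.intervalIntegral_pos_of_pos_on
      (IntervalIntegrable.sub intervalIntegrable_const (P_intInt hg a b)) (fun t ht => ?_) hab
    have := P_lt hg hg_ae (le_trans ha ht.1.le) ht.2 hb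
    linarith
  have hsub : (∫ t in a..b, (P g b - P g t)) = P g b * (b - a) - ∫ t in a..b, P g t := by
    rw [intervalIntegral.integral_sub intervalIntegrable_const (P_intInt hg a b),
      intervalIntegral.integral_const, smul_eq_mul]
    ring
  linarith

noncomputable def H (g : ℝ → ℝ) (y : ℝ) : ℝ := ∫ t in (0:ℝ)..y, (y - t) * ind g t

lemma decomp (hg : IntegrableOn g (Icc 0 1)) (x y : ℝ) :
    H g y - H g x - (y - x) * P g x = ∫ t in x..y, (y - t) * ind g t := by
  have hint : ∀ a b c : ℝ, IntervalIntegrable (fun t => (c - t) * ind g t) volume a b := by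
    intro a b c
    exact (ind_intInt hg a b).continuousOn_mul (by fun_prop) 
  have hsplit : H g y = (∫ t in (0:ℝ)..x, (y - t) * ind g t) + ∫ t in x..y, (y - t) * ind g t := by
    rw [H, intervalIntegral.integral_add_adjacent_intervals (hint 0 x y) (hint x y y)]
  have hlin : (∫ t in (0:ℝ)..x, (y - t) * ind g t)
      = (y - x) * P g x + H g x := by
    have : ∀ t, (y - t) * ind g t = (y - x) * ind g t + (x - t) * ind g t := by
      intro t; ring
    rw [intervalIntegral.integral_congr (fun t _ => this t),
      intervalIntegral.integral_add ((ind_intInt hg 0 x).const_mul _) (hint 0 x x),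
      intervalIntegral.integral_const_mul, H, P]
  rw [hsplit, hlin]; ring

lemma H_hasDerivAt (hg : IntegrableOn g (Icc 0 1)) (x : ℝ) :
    HasDerivAt (H g) (P g x) x := by
  rw [hasDerivAt_iff_isLittleO]
  rw [Asymptotics.isLittleO_iff]
  intro c hc
  set N : ℝ → ℝ := fun y => |∫ t in x..y, ‖ind g t‖| with hN
  have hNcont : ContinuousAt N x := by
    have : Continuous fun y => ∫ t in x..y, ‖ind g t‖ :=
      intervalIntegral.continuous_primitive (fun a b => (ind_intInt hg a b).norm) x
    exact (continuous_abs.comp this).continuousAt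
  have hN0 : N x = 0 := by simp [hN]
  have hev : ∀ᶠ y in nhds x, N y < c := by
    have := hNcont.tendsto
    rw [hN0] at this
    exact this.eventually_lt_const hc
  filter_upwards [hev] with y hy
  have hkey : ‖H g y - H g x - (y - x) * P g x‖ ≤ |y - x| * N y := by
    rw [decomp hg x y]
    calc ‖∫ t in x..y, (y - t) * ind g t‖
        ≤ |∫ t in x..y, |y - x| * ‖ind g t‖| := by
          refine intervalIntegral.norm_integral_le_abs_of_norm_le ?_
            (((ind_intInt hg x y).norm).const_mul _)
          refine (ae_restrict_iff' measurableSet_uIoc).2 (Filter.Eventually.of_forall ?_)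
          intro t ht
          rw [norm_mul]
          have h1 : ‖y - t‖ ≤ |y - x| := by
            rw [Real.norm_eq_abs]
            rcases le_total x y with h | h
            · rw [uIoc_of_le h] at ht
              rw [abs_of_nonneg (by linarith [ht.2] : (0:ℝ) ≤ y - t),
                abs_of_nonneg (by linarith : (0:ℝ) ≤ y - x)]
              linarith [ht.1]
            · rw [uIoc_of_ge h] at ht
              rw [abs_of_nonpos (by linarith [ht.1] : y - t ≤ 0),
                abs_of_nonpos (by linarith : y - x ≤ 0)]
              linarith [ht.2]
          exact mul_le_mul_of_nonneg_right h1 (norm_nonneg _)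
    _ = |y - x| * N y := by
          rw [intervalIntegral.integral_const_mul, abs_mul, abs_abs, hN]
  calc ‖H g y - H g x - (y - x) * P g x‖ ≤ |y - x| * N y := hkey
    _ ≤ |y - x| * c := by
        refine mul_le_mul_of_nonneg_left hy.le (abs_nonneg _)
    _ = c * ‖y - x‖ := by rw [Real.norm_eq_abs]; ring

lemma Q_eq_H (hg : IntegrableOn g (Icc 0 1)) : Q g = H g := by
  have hdiff : ∀ x, HasDerivAt (fun y => Q g y - H g y) 0 x := by
    intro x
    have h := (Q_hasDerivAt hg x).sub (H_hasDerivAt hg x)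
    rw [sub_self] at h
    exact h
  have hconst : ∀ x, Q g x - H g x = Q g 0 - H g 0 := by
    intro x
    exact is_const_of_deriv_eq_zero (fun y => (hdiff y).differentiableAt)
      (fun y => (hdiff y).deriv) x 0
  funext x
  have h1 := hconst x
  have h2 : Q g 0 = 0 := Q_nonpos hg le_rfl
  have h3 : H g 0 = 0 := by rw [H, intervalIntegral.integral_same]
  linarith

lemma Q_one_eq (hg : IntegrableOn g (Icc 0 1)) :
    Q g 1 = ∫ t in Set.Ioc (0:ℝ) 1, (1 - t) * g t := by
  rw [Q_eq_H hg, H, intervalIntegral.integral_of_le (zero_le_one)]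
  refine setIntegral_congr_fun measurableSet_Ioc fun t ht => ?_
  rw [ind, Set.indicator_of_mem ht]

lemma F_hasDerivAt (hf : IntegrableOn f (Icc 0 1)) (hf_cont : ContinuousOn f (Icc 0 1))
    {x : ℝ} (hx : x ∈ Ioo (0:ℝ) 1) : HasDerivAt (P f) (f x) x := by
  have hnhds : Icc (0:ℝ) 1 ∈ nhds x := Icc_mem_nhds hx.1 hx.2
  have hfx : ContinuousAt f x := (hf_cont x (Ioo_subset_Icc_self hx)).continuousAt hnhds
  have heq : f =ᶠ[nhds x] ind f := by
    filter_upwards [Ioo_mem_nhds hx.1 hx.2] with t ht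
    rw [ind, Set.indicator_of_mem (Ioo_subset_Ioc_self ht)]
  have hcont : ContinuousAt (ind f) x := hfx.congr heq
  have hmeas : StronglyMeasurableAtFilter (ind f) (nhds x) volume :=
    ⟨univ, Filter.univ_mem, (ind_integrable hf).aestronglyMeasurable.restrict⟩
  have := intervalIntegral.integral_hasDerivAt_right (ind_intInt hf 0 x) hmeas hcont
  rw [← heq.self_of_nhds] at this
  exact this

lemma ftc_main (hf : IntegrableOn f (Icc 0 1)) (hg : IntegrableOn g (Icc 0 1))
    (hf_cont : ContinuousOn f (Icc 0 1)) {p : ℝ} (hp : p ∈ Icc (0:ℝ) 1)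
    (hf_one : P f 1 = 1) :
    ∫ x in p..1, (Q g x * f x - P g x * (1 - P f x)) = Q g p * (1 - P f p) := by
  have hcontOn : ContinuousOn (fun x => Q g x * (1 - P f x)) (Icc p 1) :=
    ((Q_continuous hg).continuousOn.mul ((continuous_const.sub (P_continuous hf)).continuousOn))
  have hIccSub : Icc p 1 ⊆ Icc (0:ℝ) 1 := Icc_subset_Icc hp.1 le_rfl
  have hintInt : IntervalIntegrable (fun x => P g x * (1 - P f x) - Q g x * f x) volume p 1 := by
    refine ContinuousOn.intervalIntegrable ?_
    rw [uIcc_of_le hp.2]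
    exact ((P_continuous hg).continuousOn.mul
        ((continuous_const.sub (P_continuous hf)).continuousOn)).sub
      ((Q_continuous hg).continuousOn.mul (hf_cont.mono hIccSub))
  have hderiv : ∀ x ∈ Ioo p 1, HasDerivWithinAt (fun y => Q g y * (1 - P f y))
      (P g x * (1 - P f x) - Q g x * f x) (Ioi x) x := by
    intro x hx
    have hx01 : x ∈ Ioo (0:ℝ) 1 := ⟨lt_of_le_of_lt hp.1 hx.1, hx.2⟩
    have h1 : HasDerivAt (fun y => 1 - P f y) (-(f x)) x :=
      (F_hasDerivAt hf hf_cont hx01).const_sub 1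
    have h2 := (Q_hasDerivAt hg x).mul h1
    have h3 : P g x * (1 - P f x) + Q g x * -(f x) = P g x * (1 - P f x) - Q g x * f x := by ring
    rw [h3] at h2
    exact h2.hasDerivWithinAt
  have h1 := intervalIntegral.integral_eq_sub_of_hasDeriv_right_of_le hp.2 hcontOn hderiv hintInt
  rw [hf_one] at h1
  have h2 : ∫ x in p..1, (Q g x * f x - P g x * (1 - P f x))
      = -∫ x in p..1, (P g x * (1 - P f x) - Q g x * f x) := by
    rw [← intervalIntegral.integral_neg]
    congr 1; funext x; ring
  rw [h2, h1]; ring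

lemma key_pt (hg : IntegrableOn g (Icc 0 1)) (hg_ae : ∀ᵐ t, t ∈ Set.Icc (0:ℝ) 1 → 0 < g t)
    {s θ c r : ℝ} (hc : 0 ≤ c) (hsθ : s ≤ θ) (hθ : θ ≤ 1) (hrel : r = c * (θ - s)) :
    Q g θ * c - P g θ * r ≤ Q g s * c := by
  have h := Q_key hg hg_ae hsθ hθ
  have hP := P_nonneg hg hg_ae θ
  nlinarith [mul_le_mul_of_nonneg_right h hc]

lemma key_pt_lt (hg : IntegrableOn g (Icc 0 1)) (hg_ae : ∀ᵐ t, t ∈ Set.Icc (0:ℝ) 1 → 0 < g t)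
    {s θ c r : ℝ} (hc : 0 < c) (hs0 : 0 ≤ s) (hsθ : s < θ) (hθ : θ ≤ 1)
    (hrel : r = c * (θ - s)) :
    Q g θ * c - P g θ * r < Q g s * c := by
  have h := Q_key_lt hg hg_ae hs0 hsθ hθ
  have h2 : Q g θ * c - P g θ * r = ((Q g θ - Q g s) - P g θ * (θ - s)) * c + Q g s * c := by
    rw [hrel]; ring
  rw [h2]
  have h3 : ((Q g θ - Q g s) - P g θ * (θ - s)) * c < 0 :=
    mul_neg_of_neg_of_pos (by linarith) hc
  linarith

lemma setInt_pos {φ : ℝ → ℝ} {s : Set ℝ} (hs : MeasurableSet s) (hμ : 0 < volume s)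
    (hpos : ∀ᵐ t, t ∈ s → 0 < φ t) (hi : IntegrableOn φ s) : 0 < ∫ t in s, φ t := by
  rw [setIntegral_pos_iff_support_of_nonneg_ae
    ((ae_restrict_iff' hs).2 (hpos.mono fun t h ht => (h ht).le)) hi]
  have hsub : ∀ᵐ t, t ∈ s → t ∈ Function.support φ ∩ s := by
    filter_upwards [hpos] with t ht hmem
    exact ⟨Function.mem_support.mpr (ht hmem).ne', hmem⟩
  calc (0:ENNReal) < volume s := hμ
    _ ≤ _ := measure_mono_ae hsub

variable {g : ℝ → ℝ}

lemma tg_int (hg : IntegrableOn g (Icc 0 1)) :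
    IntegrableOn (fun t => t * g t) (Set.Ioc (0:ℝ) 1) := by
  refine Integrable.bdd_mul (c := 1) (hg.mono_set Ioc_subset_Icc_self)
    (aestronglyMeasurable_id) ?_
  refine (ae_restrict_iff' measurableSet_Ioc).2 (Filter.Eventually.of_forall fun t ht => ?_)
  rw [Real.norm_eq_abs, abs_of_pos ht.1]
  exact ht.2

lemma muG_lt_one (hg : IntegrableOn g (Icc 0 1))
    (hg_ae : ∀ᵐ t, t ∈ Set.Icc (0:ℝ) 1 → 0 < g t)
    (hg_one : (∫ t in Set.Ioc (0:ℝ) 1, g t) = 1) :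
    (∫ t in Set.Ioc (0:ℝ) 1, (1 - t) * g t) = 1 - (∫ t in Set.Ioc (0:ℝ) 1, t * g t)
    ∧ (∫ t in Set.Ioc (0:ℝ) 1, t * g t) < 1 ∧ 0 ≤ (∫ t in Set.Ioc (0:ℝ) 1, t * g t) := by
  have hg' : IntegrableOn g (Set.Ioc (0:ℝ) 1) := hg.mono_set Ioc_subset_Icc_self
  have htg := tg_int hg
  have heq : (∫ t in Set.Ioc (0:ℝ) 1, (1 - t) * g t)
      = 1 - (∫ t in Set.Ioc (0:ℝ) 1, t * g t) := by
    have h1 : (fun t => (1 - t) * g t) = (fun t => g t - t * g t) := by funext t; ring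
    rw [h1, integral_sub hg' htg, hg_one]
  refine ⟨heq, ?_, ?_⟩
  · have hpos : 0 < ∫ t in Set.Ioc (0:ℝ) 1, (1 - t) * g t := by
      rw [← setIntegral_congr_set (Ioo_ae_eq_Ioc (a := (0:ℝ)) (b := 1))]
      refine setInt_pos measurableSet_Ioo (by simp) ?_ ?_
      · filter_upwards [hg_ae] with t ht hmem
        have := ht ⟨hmem.1.le, hmem.2.le⟩
        nlinarith [hmem.2]
      · have hio : IntegrableOn (fun t => (1 - t) * g t) (Set.Ioc (0:ℝ) 1) :=
          (hg'.sub htg).congr (Filter.Eventually.of_forall fun t => by simp only [Pi.sub_apply]; ring)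
        exact hio.mono_set Ioo_subset_Ioc_self
    linarith [heq]
  · refine setIntegral_nonneg_ae measurableSet_Ioc ?_
    filter_upwards [hg_ae] with t ht hmem
    exact mul_nonneg hmem.1.le (ht ⟨hmem.1.le, hmem.2⟩).le

end S2

open S2 Set intervalIntegral

/-- with `A = ∫_{θ*}^1 𝒢(ψ(θ)) f(θ) dθ`, `π^EAO` and `π^EAFP` the maximal
ex-ante at-will and ex-ante fixed-price profits, one has `0 < π^EAFP < π^EAO < A`,
`δ̄ = π^EAO/A ∈ (0,1)`, `δ* = π^EAFP/A < δ̄`, and `δ·A ≷ π^EAO` according as `δ ≷ δ̄`. -/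
theorem stmt2
    (f g : ℝ → ℝ)
    (hf_int : IntegrableOn f (Set.Icc 0 1))
    (hg_int : IntegrableOn g (Set.Icc 0 1))
    (hf_ae : ∀ᵐ t, t ∈ Set.Icc (0:ℝ) 1 → 0 < f t)
    (hg_ae : ∀ᵐ t, t ∈ Set.Icc (0:ℝ) 1 → 0 < g t)
    (hf_one : cdf f 1 = 1)
    (hg_one : cdf g 1 = 1)
    (hf_cont : ContinuousOn f (Set.Icc 0 1))
    (hf_pos : ∀ t ∈ Set.Icc (0:ℝ) 1, 0 < f t)
    (hpsi_mono : StrictMonoOn (psi f) (Set.Icc 0 1))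
    (θs : ℝ) (hθs : θs ∈ Set.Ioo (0:ℝ) 1) (hθs0 : psi f θs = 0)
    (piEAO piEAFP : ℝ)
    (hEAO : IsGreatest ((fun p => (1 - cdf f p) * calG g p) '' Set.Icc (0:ℝ) 1) piEAO)
    (hEAFP : IsGreatest ((fun p => (1 - cdf f p) * (p - muG g)) '' Set.Icc (0:ℝ) 1) piEAFP) :
    0 < piEAFP ∧ piEAFP < piEAO ∧
    piEAO < (∫ θ in θs..1, calG g (psi f θ) * f θ) ∧
    piEAO / (∫ θ in θs..1, calG g (psi f θ) * f θ) ∈ Set.Ioo (0:ℝ) 1 ∧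
    piEAFP / (∫ θ in θs..1, calG g (psi f θ) * f θ) <
      piEAO / (∫ θ in θs..1, calG g (psi f θ) * f θ) ∧
    (∀ δ ∈ Set.Ioo (piEAO / (∫ θ in θs..1, calG g (psi f θ) * f θ)) 1,
      piEAO < δ * (∫ θ in θs..1, calG g (psi f θ) * f θ)) ∧
    (∀ δ ∈ Set.Ioo (0:ℝ) (piEAO / (∫ θ in θs..1, calG g (psi f θ) * f θ)),
      δ * (∫ θ in θs..1, calG g (psi f θ) * f θ) < piEAO) := by
  have hcdf_f : ∀ {x : ℝ}, x ≤ 1 → cdf f x = P f x := fun {x} hx => (P_eq_cdf hx).symm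
  have hcdf_g : ∀ {x : ℝ}, x ≤ 1 → cdf g x = P g x := fun {x} hx => (P_eq_cdf hx).symm
  have hcalG : ∀ {x : ℝ}, x ≤ 1 → calG g x = Q g x := fun {x} hx => (Q_eq_calG hg_int hx).symm
  have hF1 : P f 1 = 1 := by rw [← hcdf_f le_rfl]; exact hf_one
  have hG1 : P g 1 = 1 := by rw [← hcdf_g le_rfl]; exact hg_one
  have hFle : ∀ x : ℝ, x ≤ 1 → P f x ≤ 1 := fun x hx => by
    rw [← hF1]; exact P_mono hf_int hf_ae hx
  have hFlt : ∀ x : ℝ, 0 ≤ x → x < 1 → P f x < 1 := fun x h0 h1 => by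
    rw [← hF1]; exact P_lt hf_int hf_ae h0 h1 le_rfl
  -- psi facts
  have hψ1 : psi f 1 = 1 := by rw [psi, hf_one]; simp
  have hψrel : ∀ θ ∈ Icc (0:ℝ) 1, 1 - P f θ = f θ * (θ - psi f θ) := by
    intro θ hθ
    have hfθ := hf_pos θ hθ
    rw [psi, hcdf_f hθ.2]
    field_simp
    ring
  have hψle1 : ∀ θ ∈ Icc (0:ℝ) 1, psi f θ ≤ 1 := fun θ hθ => by
    rw [← hψ1]
    exact hpsi_mono.monotoneOn hθ (right_mem_Icc.2 zero_le_one) hθ.2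
  have hψleθ : ∀ θ ∈ Icc (0:ℝ) 1, psi f θ ≤ θ := fun θ hθ => by
    have h1 := hψrel θ hθ
    have h2 := hf_pos θ hθ
    have h3 := hFle θ hθ.2
    nlinarith
  have hψltθ : ∀ θ : ℝ, 0 ≤ θ → θ < 1 → psi f θ < θ := fun θ h0 h1 => by
    have hθ : θ ∈ Icc (0:ℝ) 1 := ⟨h0, h1.le⟩
    have h2 := hψrel θ hθ
    have h3 := hf_pos θ hθ
    have h4 := hFlt θ h0 h1
    nlinarith
  have hθsI : θs ∈ Icc (0:ℝ) 1 := ⟨hθs.1.le, hθs.2.le⟩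
  have hψpos : ∀ θ, θs < θ → θ ≤ 1 → 0 < psi f θ := fun θ h1 h2 => by
    have := hpsi_mono hθsI ⟨le_trans hθs.1.le h1.le, h2⟩ h1
    rwa [hθs0] at this
  have hψnonpos : ∀ θ : ℝ, 0 ≤ θ → θ ≤ θs → psi f θ ≤ 0 := fun θ h0 h1 => by
    have := hpsi_mono.monotoneOn ⟨h0, le_trans h1 hθs.2.le⟩ hθsI h1
    rwa [hθs0] at this
  -- continuity
  have hcdfF_cont : ContinuousOn (cdf f) (Icc (0:ℝ) 1) :=
    (P_continuous hf_int).continuousOn.congr (fun x hx => hcdf_f hx.2)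
  have hψcont : ContinuousOn (psi f) (Icc (0:ℝ) 1) := by
    have h : ContinuousOn (fun θ => θ - (1 - cdf f θ)/f θ) (Icc (0:ℝ) 1) :=
      continuousOn_id.sub ((continuousOn_const.sub hcdfF_cont).div hf_cont
        (fun x hx => (hf_pos x hx).ne'))
    exact h
  have hQψf_cont : ContinuousOn (fun x => Q g (psi f x) * f x) (Icc (0:ℝ) 1) :=
    ((Q_continuous hg_int).comp_continuousOn hψcont).mul hf_cont
  have hD_cont : ContinuousOn (fun x => Q g x * f x - P g x * (1 - P f x)) (Icc (0:ℝ) 1) :=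
    ((Q_continuous hg_int).continuousOn.mul hf_cont).sub
      ((P_continuous hg_int).continuousOn.mul
        ((continuous_const.sub (P_continuous hf_int)).continuousOn))
  have hsubII : ∀ {φ : ℝ → ℝ}, ContinuousOn φ (Icc (0:ℝ) 1) → ∀ a b : ℝ,
      a ∈ Icc (0:ℝ) 1 → b ∈ Icc (0:ℝ) 1 → IntervalIntegrable φ volume a b := by
    intro φ hφ a b ha hb
    exact (hφ.mono (uIcc_subset_Icc ha hb)).intervalIntegrable
  have h1I : (1:ℝ) ∈ Icc (0:ℝ) 1 := right_mem_Icc.2 zero_le_one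
  -- piEAO positive
  have hπO_lb : (1 - cdf f θs) * calG g θs ≤ piEAO :=
    hEAO.2 (Set.mem_image_of_mem _ hθsI)
  have hcθs : cdf f θs < 1 := by rw [hcdf_f hθs.2.le]; exact hFlt θs hθs.1.le hθs.2
  have hcGθs : 0 < calG g θs := by
    rw [hcalG hθs.2.le]; exact Q_pos hg_int hg_ae hθs.1 hθs.2.le
  have hπO_pos : 0 < piEAO := lt_of_lt_of_le (mul_pos (by linarith) hcGθs) hπO_lb
  -- maximizer of EAO
  obtain ⟨p₀, hp₀mem, hp₀⟩ := hEAO.1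
  have hp₀' : (1 - cdf f p₀) * calG g p₀ = piEAO := hp₀
  have hp₀lt1 : p₀ < 1 := by
    rcases lt_or_eq_of_le hp₀mem.2 with h | h
    · exact h
    · exfalso
      rw [h, hf_one] at hp₀'
      norm_num at hp₀'
      linarith
  have hp₀Q : Q g p₀ * (1 - P f p₀) = piEAO := by
    rw [← hp₀', hcdf_f hp₀mem.2, hcalG hp₀mem.2]; ring
  have hftc := ftc_main hf_int hg_int hf_cont hp₀mem hF1
  -- the gap integrand D
  set m := max p₀ θs with hm
  have hmI : m ∈ Icc (0:ℝ) 1 := ⟨le_trans hp₀mem.1 (le_max_left _ _),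
    max_le hp₀lt1.le hθs.2.le⟩
  have hmlt1 : m < 1 := max_lt hp₀lt1 hθs.2
  have hD_nonneg : ∀ x ∈ Icc (0:ℝ) 1,
      Q g x * f x - P g x * (1 - P f x) ≤ Q g (psi f x) * f x := by
    intro x hx
    exact key_pt hg_int hg_ae (hf_pos x hx).le (hψleθ x hx) hx.2 (hψrel x hx)
  have hD_lt : ∀ x : ℝ, θs < x → x < 1 →
      Q g x * f x - P g x * (1 - P f x) < Q g (psi f x) * f x := by
    intro x h1 h2
    have hxI : x ∈ Icc (0:ℝ) 1 := ⟨le_trans hθs.1.le h1.le, h2.le⟩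
    exact key_pt_lt hg_int hg_ae (hf_pos x hxI) (hψpos x h1 h2.le).le
      (hψltθ x hxI.1 h2) hxI.2 (hψrel x hxI)
  set D : ℝ → ℝ := fun x => Q g (psi f x) * f x - (Q g x * f x - P g x * (1 - P f x))
    with hDdef
  have hD_contOn : ContinuousOn D (Icc (0:ℝ) 1) := hQψf_cont.sub hD_cont
  have hDnn : ∀ x ∈ Icc (0:ℝ) 1, 0 ≤ D x := fun x hx => by
    simp only [hDdef]; linarith [hD_nonneg x hx]
  have hDpos : ∀ x ∈ Ioo m 1, 0 < D x := fun x hx => by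
    simp only [hDdef]
    linarith [hD_lt x (lt_of_le_of_lt (le_max_right p₀ θs) hx.1) hx.2]
  have hI1 : 0 ≤ ∫ x in p₀..m, D x :=
    intervalIntegral.integral_nonneg (le_max_left _ _)
      (fun u hu => hDnn u ⟨le_trans hp₀mem.1 hu.1, le_trans hu.2 hmI.2⟩)
  have hI2 : 0 < ∫ x in m..1, D x :=
    intervalIntegral.intervalIntegral_pos_of_pos_on (hsubII hD_contOn m 1 hmI h1I)
      hDpos hmlt1
  have hID : 0 < ∫ x in p₀..1, D x := by
    rw [← intervalIntegral.integral_add_adjacent_intervals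
      (hsubII hD_contOn p₀ m hp₀mem hmI) (hsubII hD_contOn m 1 hmI h1I)]
    linarith
  have hIsub : (∫ x in p₀..1, D x)
      = (∫ x in p₀..1, Q g (psi f x) * f x)
        - ∫ x in p₀..1, (Q g x * f x - P g x * (1 - P f x)) :=
    intervalIntegral.integral_sub (hsubII hQψf_cont p₀ 1 hp₀mem h1I)
      (hsubII hD_cont p₀ 1 hp₀mem h1I)
  have hπ_lt : piEAO < ∫ x in p₀..1, Q g (psi f x) * f x := by
    rw [← hp₀Q, ← hftc]; linarith
  have hcase : (∫ x in p₀..1, Q g (psi f x) * f x)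
      ≤ ∫ θ in θs..1, Q g (psi f θ) * f θ := by
    rcases le_total p₀ θs with h | h
    · have hzero : (∫ x in p₀..θs, Q g (psi f x) * f x) = (0:ℝ) := by
        have heq : (∫ x in p₀..θs, Q g (psi f x) * f x) = ∫ _x in p₀..θs, (0:ℝ) := by
          refine intervalIntegral.integral_congr fun x hx => ?_
          rw [uIcc_of_le h] at hx
          rw [Q_nonpos hg_int (hψnonpos x (le_trans hp₀mem.1 hx.1) hx.2), zero_mul]
        simpa using heq
      have hadd := intervalIntegral.integral_add_adjacent_intervals
        (hsubII hQψf_cont p₀ θs hp₀mem hθsI) (hsubII hQψf_cont θs 1 hθsI h1I)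
      linarith
    · have hnn : 0 ≤ ∫ x in θs..p₀, Q g (psi f x) * f x :=
        intervalIntegral.integral_nonneg h (fun u hu => mul_nonneg
          (Q_nonneg hg_int hg_ae _)
          (hf_pos u ⟨le_trans hθs.1.le hu.1, le_trans hu.2 hp₀mem.2⟩).le)
      have hadd := intervalIntegral.integral_add_adjacent_intervals
        (hsubII hQψf_cont θs p₀ hθsI hp₀mem) (hsubII hQψf_cont p₀ 1 hp₀mem h1I)
      linarith
  have hAeq : (∫ θ in θs..1, calG g (psi f θ) * f θ)
      = ∫ θ in θs..1, Q g (psi f θ) * f θ := by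
    refine intervalIntegral.integral_congr fun x hx => ?_
    rw [uIcc_of_le hθs.2.le] at hx
    rw [hcalG (hψle1 x ⟨le_trans hθs.1.le hx.1, hx.2⟩)]
  have hπO_lt_A : piEAO < ∫ θ in θs..1, calG g (psi f θ) * f θ := by
    rw [hAeq]; linarith
  -- piEAFP facts
  obtain ⟨hμkey, hμ1, hμ0⟩ := muG_lt_one hg_int hg_ae hg_one
  have hμ1' : muG g < 1 := hμ1
  have hμ0' : 0 ≤ muG g := hμ0
  have hp'mem : ((1 + muG g)/2) ∈ Icc (0:ℝ) 1 := ⟨by linarith, by linarith⟩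
  have hπF_lb : (1 - cdf f ((1 + muG g)/2)) * ((1 + muG g)/2 - muG g) ≤ piEAFP :=
    hEAFP.2 (Set.mem_image_of_mem _ hp'mem)
  have hcdfp' : cdf f ((1 + muG g)/2) < 1 := by
    rw [hcdf_f hp'mem.2]; exact hFlt _ hp'mem.1 (by linarith)
  have hπF_pos : 0 < piEAFP :=
    lt_of_lt_of_le (mul_pos (by linarith) (by linarith)) hπF_lb
  obtain ⟨p₁, hp₁mem, hp₁⟩ := hEAFP.1
  have hp₁' : (1 - cdf f p₁) * (p₁ - muG g) = piEAFP := hp₁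
  have hcdfp₁ : cdf f p₁ ≤ 1 := by rw [hcdf_f hp₁mem.2]; exact hFle _ hp₁mem.2
  have hprod : 0 < (1 - cdf f p₁) * (p₁ - muG g) := by rw [hp₁']; exact hπF_pos
  have hfac := mul_pos_iff.mp hprod
  have hf1 : 0 < 1 - cdf f p₁ := by
    rcases hfac with ⟨h, _⟩ | ⟨h, _⟩
    · exact h
    · linarith
  have hf2 : 0 < p₁ - muG g := by
    rcases hfac with ⟨_, h⟩ | ⟨h, _⟩
    · exact h
    · linarith
  have hp₁lt1 : p₁ < 1 := by
    by_contra hcon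
    have h : p₁ = 1 := le_antisymm hp₁mem.2 (not_lt.mp hcon)
    rw [h, hf_one] at hf1
    norm_num at hf1
  have hQ1 : Q g 1 = 1 - muG g := by rw [Q_one_eq hg_int]; exact hμkey
  have hstep : 0 < ∫ t in p₁..1, (1 - P g t) := by
    refine intervalIntegral.intervalIntegral_pos_of_pos_on
      (hsubII ((continuous_const.sub (P_continuous hg_int)).continuousOn) p₁ 1 hp₁mem h1I)
      (fun t ht => ?_) hp₁lt1
    have := P_lt hg_int hg_ae (le_trans hp₁mem.1 ht.1.le) ht.2 le_rfl
    rw [hG1] at this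
    linarith
  have hsub2 : (∫ t in p₁..1, (1 - P g t)) = (1 - p₁) - (Q g 1 - Q g p₁) := by
    rw [intervalIntegral.integral_sub intervalIntegrable_const (P_intInt hg_int p₁ 1),
      intervalIntegral.integral_const, ← Q_sub hg_int p₁ 1, smul_eq_mul]
    ring
  have hQp₁ : p₁ - muG g < Q g p₁ := by
    rw [hQ1] at hsub2
    linarith
  have hπF_lt : piEAFP < piEAO := by
    have hle : (1 - cdf f p₁) * calG g p₁ ≤ piEAO :=
      hEAO.2 (Set.mem_image_of_mem _ hp₁mem)
    have hlt : piEAFP < (1 - cdf f p₁) * calG g p₁ := by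
      rw [← hp₁', hcalG hp₁mem.2]
      exact mul_lt_mul_of_pos_left hQp₁ hf1
    linarith
  -- conclusion
  have hA_pos : 0 < ∫ θ in θs..1, calG g (psi f θ) * f θ := by linarith
  refine ⟨hπF_pos, hπF_lt, hπO_lt_A,
    ⟨div_pos hπO_pos hA_pos, (div_lt_one hA_pos).2 hπO_lt_A⟩,
    (div_lt_div_iff_of_pos_right hA_pos).2 hπF_lt, ?_, ?_⟩
  · intro δ hδ
    exact (div_lt_iff₀ hA_pos).1 hδ.1
  · intro δ hδ
    exact (lt_div_iff₀ hA_pos).1 hδ.2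
end

section
/- For every p ∈ [0,1], (1−F(p))·𝒢(p) − (1−F(p))·(p−μ) = (1−F(p))·∫_p^1 (1−G(x)) dx, and this quantity is strictly positive for p ∈ [0,1). Consequently, max_{p∈[0,1]} (1−F(p))·𝒢(p) > max_{p∈[0,1]} (1−F(p))·(p−μ) (the optimal ex-ante at-will posted-price profit strictly exceeds the optimal ex-ante fixed-price profit). -/
open MeasureTheory

open Set

/-- Positivity of a set integral of an a.e.-positive function. -/
lemma stmt4_pos_int {h : ℝ → ℝ} {a b : ℝ} (hab : a < b)
    (hint : IntegrableOn h (Ioc a b))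
    (hpos : ∀ᵐ t ∂(volume.restrict (Ioc a b)), 0 < h t) :
    0 < ∫ t in Ioc a b, h t := by
  rw [setIntegral_pos_iff_support_of_nonneg_ae (hpos.mono fun t ht => ht.le) hint]
  rw [← Measure.restrict_apply' measurableSet_Ioc]
  have hc : volume.restrict (Ioc a b) (Function.support h)ᶜ = 0 := by
    refine measure_mono_null (fun t ht => ?_) (ae_iff.mp hpos)
    simp only [mem_compl_iff, Function.mem_support, not_not] at ht
    simp [ht]
  by_contra hz
  push_neg at hz
  have h0 : volume.restrict (Ioc a b) (Function.support h) = 0 :=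
    le_antisymm hz (zero_le)
  have : volume.restrict (Ioc a b) Set.univ = 0 := by
    have := measure_union_le (μ := volume.restrict (Ioc a b))
      (Function.support h) (Function.support h)ᶜ
    rw [Set.union_compl_self, h0, hc] at this
    simpa using this
  rw [Measure.restrict_apply_univ, Real.volume_Ioc] at this
  simp [ENNReal.ofReal_eq_zero, sub_nonpos, not_lt.mpr hab.le] at this
  linarith

/-- Chasles relation for set integrals over `Ioc`. -/
lemma stmt4_int_add {h : ℝ → ℝ} (hh : IntegrableOn h (Icc 0 1)) {a b : ℝ}
    (ha : 0 ≤ a) (hab : a ≤ b) (hb : b ≤ 1) :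
    ∫ t in Ioc (0:ℝ) b, h t = (∫ t in Ioc (0:ℝ) a, h t) + ∫ t in Ioc a b, h t := by
  rw [← setIntegral_union (Ioc_disjoint_Ioc_of_le le_rfl) measurableSet_Ioc
      (hh.mono_set (Ioc_subset_Icc_self.trans (Icc_subset_Icc le_rfl (hab.trans hb))))
      (hh.mono_set ((Ioc_subset_Icc_self).trans (Icc_subset_Icc ha hb)))]
  rw [Ioc_union_Ioc_eq_Ioc ha hab]

lemma stmt4_cdf_mono {g : ℝ → ℝ} (hg : IntegrableOn g (Icc 0 1))
    (hg_ae : ∀ᵐ t, t ∈ Set.Icc (0:ℝ) 1 → 0 < g t) :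
    MonotoneOn (cdf g) (Icc 0 1) := by
  intro a ha b hb hab
  show cdf g a ≤ cdf g b
  unfold cdf
  rw [stmt4_int_add hg ha.1 hab hb.2]
  have : 0 ≤ ∫ t in Ioc a b, g t := by
    refine setIntegral_nonneg_of_ae_restrict ?_
    filter_upwards [ae_restrict_of_ae hg_ae, ae_restrict_mem measurableSet_Ioc] with t h1 h2
    exact (h1 ⟨ha.1.trans h2.1.le, h2.2.trans hb.2⟩).le
  linarith

/-- Fubini for a strongly measurable integrand. -/
lemma stmt4_fubini_meas {g : ℝ → ℝ} (hm : StronglyMeasurable g)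
    (hg : IntegrableOn g (Icc 0 1)) :
    ∫ x in Ioc (0:ℝ) 1, ∫ t in Ioc (0:ℝ) x, g t
      = ∫ t in Ioc (0:ℝ) 1, (1 - t) * g t := by
  set ν := volume.restrict (Ioc (0:ℝ) 1) with hν
  have hg1 : Integrable g ν := hg.mono_set Ioc_subset_Icc_self
  set k : ℝ × ℝ → ℝ := fun p => Set.indicator (Ioc 0 p.1) g p.2 with hk
  have hS : MeasurableSet {p : ℝ × ℝ | p.2 ∈ Ioc 0 p.1} := by
    apply MeasurableSet.inter
    · exact measurableSet_lt measurable_const measurable_snd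
    · exact measurableSet_le measurable_snd measurable_fst
  have hkm : StronglyMeasurable k := by
    have : k = Set.indicator {p : ℝ × ℝ | p.2 ∈ Ioc 0 p.1} (fun p => g p.2) := by
      funext p
      show (Ioc 0 p.1).indicator g p.2 = _
      by_cases hp : p.2 ∈ Ioc 0 p.1
      · rw [Set.indicator_of_mem hp, Set.indicator_of_mem (by exact hp)]
      · rw [Set.indicator_of_notMem hp, Set.indicator_of_notMem (by exact hp)]
    rw [this]
    exact (hm.comp_measurable measurable_snd).indicator hS
  have hint_each : ∀ x : ℝ, Integrable (fun t => k (x, t)) ν := fun x =>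
    hg1.indicator measurableSet_Ioc
  have hkint : Integrable k (ν.prod ν) := by
    rw [integrable_prod_iff hkm.aestronglyMeasurable]
    constructor
    · exact Filter.Eventually.of_forall hint_each
    · refine Integrable.mono' (integrable_const (∫ t, ‖g t‖ ∂ν))
        (hkm.aestronglyMeasurable.norm.integral_prod_right') ?_
      refine Filter.Eventually.of_forall fun x => ?_
      have h1 : ∫ t, ‖k (x, t)‖ ∂ν ≤ ∫ t, ‖g t‖ ∂ν := by
        refine integral_mono (hint_each x).norm hg1.norm fun t => ?_
        exact norm_indicator_le_norm_self g t
      have h2 : 0 ≤ ∫ t, ‖k (x, t)‖ ∂ν :=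
        integral_nonneg fun t => norm_nonneg _
      rw [Real.norm_eq_abs, abs_of_nonneg h2]
      exact h1
  have step1 : ∫ x in Ioc (0:ℝ) 1, ∫ t in Ioc (0:ℝ) x, g t
      = ∫ x, ∫ t, k (x, t) ∂ν ∂ν := by
    refine setIntegral_congr_fun measurableSet_Ioc fun x hx => ?_
    rw [hν, setIntegral_indicator measurableSet_Ioc]
    congr 1
    rw [Set.Ioc_inter_Ioc]
    simp [hx.1.le, hx.2, max_self, min_eq_right hx.2]
  have step2 : ∫ x, ∫ t, k (x, t) ∂ν ∂ν = ∫ t, ∫ x, k (x, t) ∂ν ∂ν :=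
    integral_integral_swap hkint
  rw [step1, step2]
  refine setIntegral_congr_fun measurableSet_Ioc fun t ht => ?_
  have : (fun x => k (x, t)) = Set.indicator (Ici t) (fun _ => g t) := by
    funext x
    by_cases hx : t ≤ x
    · simp [hk, Set.indicator_of_mem, Set.mem_Ioc, ht.1, hx, Set.mem_Ici]
    · simp [hk, Set.indicator_of_notMem, Set.mem_Ioc, hx, Set.mem_Ici]
  rw [this, hν, setIntegral_indicator measurableSet_Ici, setIntegral_const]
  have hset : Ioc (0:ℝ) 1 ∩ Ici t = Icc t 1 := by
    ext x
    simp only [Set.mem_inter_iff, Set.mem_Ioc, Set.mem_Ici, Set.mem_Icc]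
    constructor
    · rintro ⟨⟨_, h2⟩, h3⟩; exact ⟨h3, h2⟩
    · rintro ⟨h1, h2⟩; exact ⟨⟨lt_of_lt_of_le ht.1 h1, h2⟩, h1⟩
  rw [hset, Measure.real, Real.volume_Icc, ENNReal.toReal_ofReal (by linarith [ht.2] : (0:ℝ) ≤ 1 - t)]
  simp [smul_eq_mul]

/-- Fubini for a general integrable integrand. -/
lemma stmt4_fubini {g : ℝ → ℝ} (hg : IntegrableOn g (Icc 0 1)) :
    ∫ x in Ioc (0:ℝ) 1, cdf g x = ∫ t in Ioc (0:ℝ) 1, (1 - t) * g t := by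
  set g₀ := hg.aestronglyMeasurable.mk g with hg₀def
  have hmk : g =ᵐ[volume.restrict (Icc 0 1)] g₀ := hg.aestronglyMeasurable.ae_eq_mk
  have hg₀ : IntegrableOn g₀ (Icc 0 1) := hg.congr hmk
  have hcdf : ∀ x ∈ Icc (0:ℝ) 1, cdf g x = cdf g₀ x := by
    intro x hx
    refine integral_congr_ae ?_
    exact ae_restrict_of_ae_restrict_of_subset
      (Ioc_subset_Icc_self.trans (Icc_subset_Icc le_rfl hx.2)) hmk
  calc ∫ x in Ioc (0:ℝ) 1, cdf g x
      = ∫ x in Ioc (0:ℝ) 1, cdf g₀ x := by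
        refine setIntegral_congr_fun measurableSet_Ioc fun x hx => ?_
        exact hcdf x (Ioc_subset_Icc_self hx)
    _ = ∫ t in Ioc (0:ℝ) 1, (1 - t) * g₀ t :=
        stmt4_fubini_meas hg.aestronglyMeasurable.stronglyMeasurable_mk hg₀
    _ = ∫ t in Ioc (0:ℝ) 1, (1 - t) * g t := by
        refine integral_congr_ae ?_
        have := ae_restrict_of_ae_restrict_of_subset Ioc_subset_Icc_self hmk
        filter_upwards [this] with t ht
        rw [ht]

/-- for every `p ∈ [0,1]`,
`(1−F(p))·𝒢(p) − (1−F(p))·(p−μ) = (1−F(p))·∫_p^1 (1−G(x)) dx`, strictly positive for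
`p ∈ [0,1)`; consequently the optimal ex-ante at-will posted-price profit strictly exceeds
the optimal ex-ante fixed-price profit. -/
theorem stmt4
    (f g : ℝ → ℝ)
    (hf_int : IntegrableOn f (Set.Icc 0 1))
    (hg_int : IntegrableOn g (Set.Icc 0 1))
    (hf_ae : ∀ᵐ t, t ∈ Set.Icc (0:ℝ) 1 → 0 < f t)
    (hg_ae : ∀ᵐ t, t ∈ Set.Icc (0:ℝ) 1 → 0 < g t)
    (hf_one : cdf f 1 = 1)
    (hg_one : cdf g 1 = 1) :
    (∀ p ∈ Set.Icc (0:ℝ) 1,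
      (1 - cdf f p) * calG g p - (1 - cdf f p) * (p - muG g) =
        (1 - cdf f p) * ∫ x in p..1, (1 - cdf g x)) ∧
    (∀ p ∈ Set.Ico (0:ℝ) 1,
      0 < (1 - cdf f p) * calG g p - (1 - cdf f p) * (p - muG g)) ∧
    ∀ piEAO piEAFP : ℝ,
      IsGreatest ((fun p => (1 - cdf f p) * calG g p) '' Set.Icc (0:ℝ) 1) piEAO →
      IsGreatest ((fun p => (1 - cdf f p) * (p - muG g)) '' Set.Icc (0:ℝ) 1) piEAFP →
      piEAFP < piEAO := by
  -- basic facts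
  have hGmono : MonotoneOn (cdf g) (Icc 0 1) := stmt4_cdf_mono hg_int hg_ae
  have hGint : IntegrableOn (cdf g) (Icc 0 1) :=
    hGmono.integrableOn_isCompact isCompact_Icc
  -- a.e. positivity of g on subintervals
  have hgpos_sub : ∀ {a b : ℝ}, 0 ≤ a → b ≤ 1 →
      ∀ᵐ t ∂(volume.restrict (Ioc a b)), 0 < g t := by
    intro a b ha hb
    filter_upwards [ae_restrict_of_ae hg_ae, ae_restrict_mem measurableSet_Ioc] with t h1 h2
    exact h1 ⟨ha.trans h2.1.le, h2.2.trans hb⟩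
  have hfpos_sub : ∀ {a b : ℝ}, 0 ≤ a → b ≤ 1 →
      ∀ᵐ t ∂(volume.restrict (Ioc a b)), 0 < f t := by
    intro a b ha hb
    filter_upwards [ae_restrict_of_ae hf_ae, ae_restrict_mem measurableSet_Ioc] with t h1 h2
    exact h1 ⟨ha.trans h2.1.le, h2.2.trans hb⟩
  -- cdf g y > 0 for y ∈ (0,1]
  have hGpos : ∀ y ∈ Ioc (0:ℝ) 1, 0 < cdf g y := by
    intro y hy
    exact stmt4_pos_int hy.1
      (hg_int.mono_set (Ioc_subset_Icc_self.trans (Icc_subset_Icc le_rfl hy.2)))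
      (hgpos_sub le_rfl hy.2)
  -- cdf g y < 1 for y ∈ [0,1)
  have hGlt : ∀ y ∈ Ico (0:ℝ) 1, cdf g y < 1 := by
    intro y hy
    have h1 : cdf g 1 = cdf g y + ∫ t in Ioc y 1, g t :=
      stmt4_int_add hg_int hy.1 hy.2.le le_rfl
    have h2 : 0 < ∫ t in Ioc y 1, g t :=
      stmt4_pos_int hy.2
        (hg_int.mono_set (Ioc_subset_Icc_self.trans (Icc_subset_Icc hy.1 le_rfl)))
        (hgpos_sub hy.1 le_rfl)
    rw [hg_one] at h1
    linarith
  -- cdf f p < 1 for p ∈ [0,1)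
  have hFlt : ∀ p ∈ Ico (0:ℝ) 1, cdf f p < 1 := by
    intro p hp
    have h1 : cdf f 1 = cdf f p + ∫ t in Ioc p 1, f t :=
      stmt4_int_add hf_int hp.1 hp.2.le le_rfl
    have h2 : 0 < ∫ t in Ioc p 1, f t :=
      stmt4_pos_int hp.2
        (hf_int.mono_set (Ioc_subset_Icc_self.trans (Icc_subset_Icc hp.1 le_rfl)))
        (hfpos_sub hp.1 le_rfl)
    rw [hf_one] at h1
    linarith
  -- muG g = 1 - calG g 1
  have hmu : muG g = 1 - calG g 1 := by
    have hf : calG g 1 = ∫ t in Ioc (0:ℝ) 1, (1 - t) * g t := stmt4_fubini hg_int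
    have hg1 : IntegrableOn g (Ioc (0:ℝ) 1) := hg_int.mono_set Ioc_subset_Icc_self
    have htg : IntegrableOn (fun t => t * g t) (Ioc (0:ℝ) 1) := by
      refine Integrable.mono' hg1.norm
        (aestronglyMeasurable_id.mul
          (hg1.aestronglyMeasurable)) ?_
      filter_upwards [ae_restrict_mem measurableSet_Ioc] with t ht
      rw [Real.norm_eq_abs, Real.norm_eq_abs, abs_mul]
      have : |t| ≤ 1 := abs_le.mpr ⟨by linarith [ht.1], ht.2⟩
      nlinarith [abs_nonneg (g t)]
    have hsplit : ∫ t in Ioc (0:ℝ) 1, (1 - t) * g t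
        = (∫ t in Ioc (0:ℝ) 1, g t) - ∫ t in Ioc (0:ℝ) 1, t * g t := by
      rw [← integral_sub hg1 htg]
      refine integral_congr_ae (Filter.Eventually.of_forall fun t => ?_)
      ring
    have : (∫ t in Ioc (0:ℝ) 1, g t) = 1 := hg_one
    rw [hf, hsplit, this]
    unfold muG
    ring
  -- key identity
  have hkey : ∀ p ∈ Icc (0:ℝ) 1,
      calG g p - (p - muG g) = ∫ x in p..1, (1 - cdf g x) := by
    intro p hp
    rw [intervalIntegral.integral_of_le hp.2]
    have hGint' : IntegrableOn (cdf g) (Ioc p 1) :=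
      hGint.mono_set (Ioc_subset_Icc_self.trans (Icc_subset_Icc hp.1 le_rfl))
    have hsub : ∫ x in Ioc p 1, (1 - cdf g x)
        = (∫ x in Ioc p 1, (1:ℝ)) - ∫ x in Ioc p 1, cdf g x :=
      integral_sub (integrable_const _) hGint'
    have hone : ∫ x in Ioc p 1, (1:ℝ) = 1 - p := by
      rw [setIntegral_const, Measure.real, Real.volume_Ioc,
        ENNReal.toReal_ofReal (by linarith [hp.2])]
      simp
    have hadd : calG g 1 = calG g p + ∫ x in Ioc p 1, cdf g x :=
      stmt4_int_add hGint hp.1 hp.2 le_rfl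
    rw [hsub, hone]
    rw [hmu]
    linarith
  -- positivity of the integral for p < 1
  have hintpos : ∀ p ∈ Ico (0:ℝ) 1, 0 < ∫ x in p..1, (1 - cdf g x) := by
    intro p hp
    rw [intervalIntegral.integral_of_le hp.2.le]
    have hne1 : ∀ᵐ t : ℝ, t ≠ (1:ℝ) := by
      rw [ae_iff]
      convert Real.volume_singleton (a := (1:ℝ)) using 2
      ext t; simp
    refine stmt4_pos_int hp.2 ?_ ?_
    · exact (integrable_const 1).sub
        (hGint.mono_set (Ioc_subset_Icc_self.trans (Icc_subset_Icc hp.1 le_rfl)))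
    · filter_upwards [ae_restrict_mem measurableSet_Ioc, ae_restrict_of_ae hne1]
        with x hx hx1
      have : cdf g x < 1 := hGlt x ⟨hp.1.trans hx.1.le, lt_of_le_of_ne hx.2 hx1⟩
      linarith
  -- calG positivity for p ∈ (0,1]
  have hcalGpos : ∀ p ∈ Ioc (0:ℝ) 1, 0 < calG g p := by
    intro p hp
    refine stmt4_pos_int hp.1
      (hGint.mono_set (Ioc_subset_Icc_self.trans (Icc_subset_Icc le_rfl hp.2))) ?_
    filter_upwards [ae_restrict_mem measurableSet_Ioc] with y hy
    exact hGpos y ⟨hy.1, hy.2.trans hp.2⟩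
  -- parts
  have part1 : ∀ p ∈ Set.Icc (0:ℝ) 1,
      (1 - cdf f p) * calG g p - (1 - cdf f p) * (p - muG g) =
        (1 - cdf f p) * ∫ x in p..1, (1 - cdf g x) := by
    intro p hp
    rw [← mul_sub, hkey p hp]
  have part2 : ∀ p ∈ Set.Ico (0:ℝ) 1,
      0 < (1 - cdf f p) * calG g p - (1 - cdf f p) * (p - muG g) := by
    intro p hp
    rw [← mul_sub, hkey p ⟨hp.1, hp.2.le⟩]
    exact mul_pos (by linarith [hFlt p hp]) (hintpos p hp)
  refine ⟨part1, part2, ?_⟩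
  intro piEAO piEAFP hO hF
  obtain ⟨⟨p0, hp0, hval⟩, hubF⟩ := hF
  have hO2 : ∀ p ∈ Icc (0:ℝ) 1, (1 - cdf f p) * calG g p ≤ piEAO := fun p hp =>
    hO.2 ⟨p, hp, rfl⟩
  rcases lt_or_eq_of_le hp0.2 with hlt | heq
  · have h2 := part2 p0 ⟨hp0.1, hlt⟩
    have h3 := hO2 p0 hp0
    have : piEAFP = (1 - cdf f p0) * (p0 - muG g) := hval.symm
    linarith
  · have hF0 : piEAFP = 0 := by
      rw [← hval, heq]
      show (1 - cdf f 1) * (1 - muG g) = 0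
      rw [hf_one]
      ring
    have hhalf : (0:ℝ) < (1 - cdf f (1/2)) * calG g (1/2) := by
      refine mul_pos ?_ (hcalGpos (1/2) (by norm_num))
      have := hFlt (1/2) (by norm_num)
      linarith
    have := hO2 (1/2) (by norm_num)
    linarith
end
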